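/- arXiv:chao-dyn/9703010 — 4 statements merged into one kernel-verified Lean document; each statement's English description precedes it below -/
import Mathlib

section
/- For a single semiflow f on a compact metric space X, η₁⁰- and η₂⁰-slow relaxations are impossible: there do not exist γ > 0, sequences of numbers εⱼ > 0 with εⱼ → 0, points xⱼ ∈ X, and (xⱼ,εⱼ)-motions φⱼ such that η₁^{εⱼ}(φⱼ,γ) → ∞, and likewise none with η₂^{εⱼ}(φⱼ,γ) → ∞, where for an (x,ε)-motion φ one sets η₁^ε(φ,γ) = inf{t ≥ 0 : dist(φ(t), ω^ε_f) < γ} and η₂^ε(φ,γ) = outer Lebesgue measure of {t ≥ 0 : dist(φ(t), ω^ε_f) ≥ γ}. -/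
open Filter Topology Metric Set MeasureTheory
open scoped ENNReal

/-- A semiflow on a metric space `X`: a map `f : [0,∞) × X → X` (encoded with time
in `ℝ`, with conditions only for nonnegative times), continuous on `[0,∞) × X`,
satisfying the semigroup identities, and injective for each fixed time. -/
structure Semiflow (X : Type*) [MetricSpace X] where
  f : ℝ → X → X
  cont : ContinuousOn (fun p : ℝ × X => f p.1 p.2) {p : ℝ × X | 0 ≤ p.1}
  map_zero : ∀ x, f 0 x = x
  semigroup : ∀ t t' : ℝ, 0 ≤ t → 0 ≤ t' → ∀ x, f t (f t' x) = f (t + t') x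
  inj : ∀ t : ℝ, 0 ≤ t → Function.Injective fun x => f t x

namespace Semiflow

variable {X : Type*} [MetricSpace X] (S : Semiflow X)

/-- The ω-limit set `ω(x)`: all limits of `f(tₙ,x)` along sequences `tₙ → ∞`. -/
def omega (x : X) : Set X :=
  {y | ∃ t : ℕ → ℝ, (∀ n, 0 ≤ t n) ∧ Tendsto t atTop atTop ∧
      Tendsto (fun n => S.f (t n) x) atTop (𝓝 y)}

/-- The complete ω-limit set `ω_f = ⋃ₓ ω(x)`. -/
def omegaF : Set X := ⋃ x : X, S.omega x

/-- An `(x,ε)`-motion (with time scale `T`): a perturbed motion which on every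
interval of length `T` departs from the true motion by less than `ε`. -/
def IsEpsMotion (T ε : ℝ) (x : X) (φ : ℝ → X) : Prop :=
  φ 0 = x ∧ ∀ t : ℝ, 0 ≤ t → ∀ τ ∈ Icc (0:ℝ) T, dist (φ (t + τ)) (S.f τ (φ t)) < ε

/-- `ω^ε(x)`: ω-limit points of all `(x,ε)`-motions. -/
def omegaEps (T ε : ℝ) (x : X) : Set X :=
  {y | ∃ φ : ℝ → X, S.IsEpsMotion T ε x φ ∧
      ∃ t : ℕ → ℝ, (∀ n, 0 ≤ t n) ∧ Tendsto t atTop atTop ∧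
        Tendsto (fun n => φ (t n)) atTop (𝓝 y)}

/-- `ω^ε_f = ⋃ₓ ω^ε(x)`. -/
def omegaEpsF (T ε : ℝ) : Set X := ⋃ x : X, S.omegaEps T ε x

/-- `ω⁰(x) = ⋂_{ε>0} ω^ε(x)`. -/
def omegaZero (T : ℝ) (x : X) : Set X := ⋂ ε > (0:ℝ), S.omegaEps T ε x

/-- `ω⁰_f = ⋃ₓ ω⁰(x)`. -/
def omegaZeroF (T : ℝ) : Set X := ⋃ x : X, S.omegaZero T x

/-- `η₁^ε(φ,γ)`: time of first entry of the `ε`-motion `φ` into the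
`γ`-neighbourhood of `ω^ε_f`. -/
noncomputable def eta1Eps (T ε : ℝ) (φ : ℝ → X) (γ : ℝ) : ℝ :=
  sInf {t : ℝ | 0 ≤ t ∧ infDist (φ t) (S.omegaEpsF T ε) < γ}

/-- `η₂^ε(φ,γ)`: outer Lebesgue measure of the set of times the `ε`-motion `φ`
spends outside the `γ`-neighbourhood of `ω^ε_f`. -/
noncomputable def eta2Eps (T ε : ℝ) (φ : ℝ → X) (γ : ℝ) : ℝ≥0∞ :=
  volume {t : ℝ | 0 ≤ t ∧ γ ≤ infDist (φ t) (S.omegaEpsF T ε)}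

end Semiflow

namespace Semiflow

variable {X : Type*} [MetricSpace X] [CompactSpace X] (S : Semiflow X)

/-- Uniform continuity of the semiflow in space, on the time interval `[0,T]`. -/
lemma uc (T : ℝ) (hT : 0 < T) :
    ∀ η > (0:ℝ), ∃ β > (0:ℝ), ∀ z₁ z₂ : X, dist z₁ z₂ ≤ β →
      ∀ τ ∈ Icc (0:ℝ) T, dist (S.f τ z₁) (S.f τ z₂) ≤ η := by
  intro η hη
  have hK : IsCompact ((Icc (0:ℝ) T) ×ˢ (univ : Set X)) := isCompact_Icc.prod isCompact_univ
  have hc : ContinuousOn (fun p : ℝ × X => S.f p.1 p.2) ((Icc (0:ℝ) T) ×ˢ (univ : Set X)) :=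
    S.cont.mono (by rintro ⟨a, b⟩ ⟨⟨h1, _⟩, _⟩; exact h1)
  have huc := hK.uniformContinuousOn_of_continuous hc
  rw [Metric.uniformContinuousOn_iff] at huc
  obtain ⟨δ, hδ, hδ'⟩ := huc η hη
  refine ⟨δ / 2, by linarith, fun z₁ z₂ hz τ hτ => ?_⟩
  have h := hδ' (τ, z₁) ⟨hτ, mem_univ _⟩ (τ, z₂) ⟨hτ, mem_univ _⟩ ?_
  · exact h.le
  · rw [Prod.dist_eq]
    simp only [dist_self]
    exact max_lt hδ (lt_of_le_of_lt hz (by linarith))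

/-- Uniform continuity of the semiflow in time near `0`, uniformly in space. -/
lemma ucTime (T : ℝ) (hT : 0 < T) :
    ∀ η > (0:ℝ), ∃ σ : ℝ, 0 < σ ∧ σ ≤ T ∧
      ∀ (z : X) (s : ℝ), 0 ≤ s → s ≤ σ → dist (S.f s z) z ≤ η := by
  intro η hη
  have hK : IsCompact ((Icc (0:ℝ) T) ×ˢ (univ : Set X)) := isCompact_Icc.prod isCompact_univ
  have hc : ContinuousOn (fun p : ℝ × X => S.f p.1 p.2) ((Icc (0:ℝ) T) ×ˢ (univ : Set X)) :=
    S.cont.mono (by rintro ⟨a, b⟩ ⟨⟨h1, _⟩, _⟩; exact h1)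
  have huc := hK.uniformContinuousOn_of_continuous hc
  rw [Metric.uniformContinuousOn_iff] at huc
  obtain ⟨δ, hδ, hδ'⟩ := huc η hη
  refine ⟨min T (δ / 2), lt_min hT (by linarith), min_le_left _ _, fun z s hs0 hsσ => ?_⟩
  have hsT : s ≤ T := hsσ.trans (min_le_left _ _)
  have h := hδ' (s, z) ⟨⟨hs0, hsT⟩, mem_univ _⟩ (0, z) ⟨⟨le_rfl, hT.le⟩, mem_univ _⟩ ?_
  · have h0 : S.f 0 z = z := S.map_zero z
    rw [h0] at h
    exact h.le
  · rw [Prod.dist_eq]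
    simp only [dist_self]
    have : dist s 0 = s := by rw [Real.dist_eq, sub_zero, abs_of_nonneg hs0]
    rw [this]
    exact max_lt (lt_of_le_of_lt (hsσ.trans (min_le_right _ _)) (by linarith)) hδ

/-- Shifting an `ε`-motion by a nonnegative time gives an `ε`-motion. -/
lemma IsEpsMotion.shift {S : Semiflow X} {T ε : ℝ} {x : X} {φ : ℝ → X}
    (h : S.IsEpsMotion T ε x φ) {a : ℝ} (ha : 0 ≤ a) :
    S.IsEpsMotion T ε (φ a) (fun t => φ (a + t)) := by
  refine ⟨by simp, fun t ht τ hτ => ?_⟩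
  have h2 := h.2 (a + t) (by linarith) τ hτ
  simpa [add_assoc] using h2

end Semiflow

namespace Semiflow

variable {X : Type*} [MetricSpace X] [CompactSpace X] (S : Semiflow X)

set_option maxHeartbeats 1000000 in
/-- The chain construction: if arbitrarily small-`ε` motions start and return
arbitrarily close to `z` (with return time at least `σ`), then `z ∈ ω^ε₀(z)` for
every `ε₀ > 0`. -/
lemma chain (T : ℝ) (hT : 0 < T) {σ : ℝ} (hσ0 : 0 < σ) (hσT : σ ≤ T) (z : X)
    (R : ∀ ρ > (0:ℝ), ∀ δ > (0:ℝ), ∃ (ε : ℝ) (χ : ℝ → X), 0 < ε ∧ ε ≤ δ ∧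
        S.IsEpsMotion T ε (χ 0) χ ∧ dist (χ 0) z ≤ ρ ∧ ∃ s, σ ≤ s ∧ dist (χ s) z ≤ ρ)
    {ε₀ : ℝ} (hε₀ : 0 < ε₀) : z ∈ S.omegaEps T ε₀ z := by
  classical
  set D : ℕ := ⌈T / σ⌉₊ + 1 with hDdef
  have hD2 : (0:ℝ) < (D:ℝ) + 2 := by positivity
  set η : ℝ := ε₀ / (2 * ((D:ℝ) + 2)) with hηdef
  have hη : 0 < η := by positivity
  obtain ⟨β₀, hβ₀, hβ₀'⟩ := S.uc T hT η hη
  set β : ℝ := min β₀ η with hβdef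
  have hβ : 0 < β := lt_min hβ₀ hη
  have hβη : β ≤ η := min_le_right _ _
  have hβuc : ∀ z₁ z₂ : X, dist z₁ z₂ ≤ β → ∀ τ ∈ Icc (0:ℝ) T,
      dist (S.f τ z₁) (S.f τ z₂) ≤ η :=
    fun z₁ z₂ hz => hβ₀' z₁ z₂ (hz.trans (min_le_left _ _))
  obtain ⟨ρ₀, hρ₀, hρ₀'⟩ := S.uc T hT (β / 8) (by positivity)
  set ρ : ℝ := min ρ₀ (β / 8) with hρdef
  have hρ : 0 < ρ := lt_min hρ₀ (by positivity)
  have hρβ : ρ ≤ β / 8 := min_le_right _ _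
  have hρuc : ∀ z₁ z₂ : X, dist z₁ z₂ ≤ ρ → ∀ τ ∈ Icc (0:ℝ) T,
      dist (S.f τ z₁) (S.f τ z₂) ≤ β / 8 :=
    fun z₁ z₂ hz => hρ₀' z₁ z₂ (hz.trans (min_le_left _ _))
  have he : (0:ℝ) < β / 8 := by positivity
  -- choose the chain pieces
  have hR : ∀ i : ℕ, ∃ (ε : ℝ) (χ : ℝ → X), 0 < ε ∧ ε ≤ β / 8 ∧ S.IsEpsMotion T ε (χ 0) χ ∧
      dist (χ 0) z ≤ min ρ (1 / ((i:ℝ) + 1)) ∧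
      ∃ s, σ ≤ s ∧ dist (χ s) z ≤ min ρ (1 / ((i:ℝ) + 1)) :=
    fun i => R (min ρ (1 / ((i:ℝ) + 1))) (lt_min hρ (by positivity)) (β / 8) he
  choose εs χ hεpos hεe hmot hd0 s hsσ hds using hR
  -- the breakpoints
  set a : ℕ → ℝ := fun n => ∑ i ∈ Finset.range n, s i with hadef
  have ha0 : a 0 = 0 := by simp [hadef]
  have hasucc : ∀ n, a (n + 1) = a n + s n := fun n => Finset.sum_range_succ _ _
  have hgap : ∀ m n : ℕ, m ≤ n → a m + ((n - m : ℕ):ℝ) * σ ≤ a n := by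
    intro m n hmn
    induction n, hmn using Nat.le_induction with
    | base => simp
    | succ n hmn ih =>
      have hsub : ((n + 1 - m : ℕ):ℝ) = ((n - m : ℕ):ℝ) + 1 := by
        rw [Nat.succ_sub hmn]; push_cast; ring
      have hs := hsσ n
      rw [hasucc n, hsub]
      nlinarith [ih]
  have hmono : StrictMono a := by
    apply strictMono_nat_of_lt_succ
    intro n
    have := hsσ n
    rw [hasucc n]; linarith
  have hage : ∀ n : ℕ, (n:ℝ) * σ ≤ a n := by
    intro n
    have := hgap 0 n (Nat.zero_le _)
    simpa [ha0] using this
  have hanneg : ∀ n : ℕ, 0 ≤ a n := by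
    intro n
    have := hage n
    nlinarith [hσ0, Nat.cast_nonneg (α := ℝ) n]
  -- the index function
  have hex : ∀ t : ℝ, ∃ n : ℕ, t < a (n + 1) := by
    intro t
    obtain ⟨n, hn⟩ := exists_nat_gt (t / σ)
    refine ⟨n, ?_⟩
    have h1 : t < (n:ℝ) * σ := by
      rw [div_lt_iff₀ hσ0] at hn; linarith
    have h2 : ((n:ℝ)) * σ ≤ ((n + 1 : ℕ):ℝ) * σ := by push_cast; nlinarith
    linarith [hage (n + 1)]
  set jdx : ℝ → ℕ := fun t => Nat.find (hex t) with hjdxdef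
  have hj1 : ∀ t, t < a (jdx t + 1) := fun t => Nat.find_spec (hex t)
  have hj2 : ∀ t, 0 ≤ t → a (jdx t) ≤ t := by
    intro t ht
    rcases Nat.eq_zero_or_pos (jdx t) with h | h
    · rw [h, ha0]; exact ht
    · obtain ⟨m, hm⟩ : ∃ m, jdx t = m + 1 := ⟨jdx t - 1, (Nat.succ_pred_eq_of_pos h).symm⟩
      have hmin := Nat.find_min (hex t) (show m < jdx t by omega)
      rw [hm]
      exact not_lt.1 hmin
  have hjmono : ∀ t t' : ℝ, 0 ≤ t → t ≤ t' → jdx t ≤ jdx t' := by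
    intro t t' ht htt'
    have h1 : a (jdx t) ≤ t := hj2 t ht
    have h2 : t' < a (jdx t' + 1) := hj1 t'
    have : a (jdx t) < a (jdx t' + 1) := by linarith
    have := hmono.lt_iff_lt.1 this
    omega
  have hja : ∀ i : ℕ, jdx (a i) = i := by
    intro i
    have h1 : jdx (a i) ≤ i := Nat.find_le (hmono (Nat.lt_succ_self i))
    have h2 : a (jdx (a i)) ≤ a i := hj2 _ (hanneg i)
    have h3 : a i < a (jdx (a i) + 1) := hj1 (a i)
    have := hmono.lt_iff_lt.1 h3
    omega
  have hj00 : jdx 0 = 0 := by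
    have ha1 : (0:ℝ) < a 1 := by
      have := hage 1; push_cast at this; nlinarith
    exact (Nat.find_eq_zero (hex 0)).2 ha1
  -- the concatenated motion
  set Φ : ℝ → X := fun t => if t ≤ 0 then z else χ (jdx t) (t - a (jdx t)) with hΦdef
  have hΦ0 : Φ 0 = z := by simp [hΦdef]
  have hΦpos : ∀ t : ℝ, 0 < t → Φ t = χ (jdx t) (t - a (jdx t)) := by
    intro t ht
    simp [hΦdef, not_le.2 ht]
  have hΦa : ∀ i : ℕ, 1 ≤ i → Φ (a i) = χ i 0 := by
    intro i hi
    have h1 : σ ≤ (i:ℝ) * σ := by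
      have : (1:ℝ) ≤ (i:ℝ) := by exact_mod_cast hi
      nlinarith
    have hpos : 0 < a i := lt_of_lt_of_le hσ0 (h1.trans (hage i))
    rw [hΦpos _ hpos, hja i, sub_self]
  clear_value jdx Φ
  -- same-piece estimate
  have same : ∀ t : ℝ, 0 ≤ t → ∀ τ, τ ∈ Icc (0:ℝ) T → jdx (t + τ) ≤ jdx t →
      dist (Φ (t + τ)) (S.f τ (Φ t)) ≤ β / 8 + β / 8 := by
    intro t ht τ hτ hc
    rcases ht.eq_or_lt with h0 | h0
    · -- t = 0
      rcases hτ.1.eq_or_lt with hτ0 | hτ0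
      · rw [← h0, ← hτ0]
        simp only [add_zero, hΦ0, S.map_zero, dist_self]
        positivity
      · rw [← h0] at hc ⊢
        have hjτ : jdx (0 + τ) = 0 := by
          rw [hj00] at hc; omega
        have hΦτ : Φ (0 + τ) = χ 0 τ := by
          rw [hΦpos _ (by linarith), hjτ, ha0]
          norm_num
        have h1 : dist (χ 0 (0 + τ)) (S.f τ (χ 0 0)) < εs 0 := (hmot 0).2 0 le_rfl τ hτ
        rw [zero_add] at h1
        have h2 : dist (S.f τ (χ 0 0)) (S.f τ z) ≤ β / 8 :=
          hρuc _ _ ((hd0 0).trans (min_le_left _ _)) τ hτ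
        calc dist (Φ (0 + τ)) (S.f τ (Φ 0))
            ≤ dist (Φ (0 + τ)) (S.f τ (χ 0 0)) + dist (S.f τ (χ 0 0)) (S.f τ (Φ 0)) :=
              dist_triangle _ _ _
          _ ≤ β / 8 + β / 8 := by
              rw [hΦτ, hΦ0]
              have := hεe 0
              linarith
    · -- t > 0
      have hji : jdx (t + τ) = jdx t :=
        le_antisymm hc (hjmono t (t + τ) ht (by linarith [hτ.1]))
      have harg : 0 ≤ t - a (jdx t) := by linarith [hj2 t ht]
      have h1 := (hmot (jdx t)).2 (t - a (jdx t)) harg τ hτ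
      have e1 : Φ t = χ (jdx t) (t - a (jdx t)) := hΦpos t h0
      have e2 : Φ (t + τ) = χ (jdx t) (t - a (jdx t) + τ) := by
        rw [hΦpos (t + τ) (by linarith [hτ.1]), hji]
        congr 1
        ring
      rw [e1, e2]
      have := hεe (jdx t)
      linarith [h1]
  -- main inductive estimate
  have main : ∀ m : ℕ, ∀ t : ℝ, 0 ≤ t → ∀ τ, τ ∈ Icc (0:ℝ) T → jdx (t + τ) ≤ jdx t + m →
      dist (Φ (t + τ)) (S.f τ (Φ t)) ≤ β / 8 + β / 8 + (m:ℝ) * η := by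
    intro m
    induction m with
    | zero =>
      intro t ht τ hτ hc
      have := same t ht τ hτ (by simpa using hc)
      simpa using this
    | succ m ih =>
      intro t ht τ hτ hc
      by_cases hcs : jdx (t + τ) ≤ jdx t
      · have h := same t ht τ hτ hcs
        have : (0:ℝ) ≤ ((m:ℝ) + 1) * η := by positivity
        push_cast
        linarith
      · push_neg at hcs
        have hij : jdx t + 1 ≤ jdx (t + τ) := hcs
        have hu0 : t < a (jdx t + 1) := hj1 t
        have htτ : (0:ℝ) ≤ t + τ := by linarith [hτ.1]
        have haj : a (jdx (t + τ)) ≤ t + τ := hj2 _ htτ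
        have hai1j : a (jdx t + 1) ≤ a (jdx (t + τ)) := hmono.monotone hij
        set i := jdx t with hidef
        set u : ℝ := a (i + 1) - t with hudef
        set v : ℝ := t + τ - a (i + 1) with hvdef
        have hu0' : 0 < u := by rw [hudef]; linarith
        have huτ : u ≤ τ := by rw [hudef]; linarith
        have hv0 : 0 ≤ v := by rw [hvdef]; linarith
        have hvT : v ≤ T := by rw [hvdef]; linarith [hτ.2]
        have huIcc : u ∈ Icc (0:ℝ) T := ⟨hu0'.le, huτ.trans hτ.2⟩
        have hvIcc : v ∈ Icc (0:ℝ) T := ⟨hv0, hvT⟩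
        -- step 1 : f u (Φ t) is close to χ i (s i)
        have h1 : dist (S.f u (Φ t)) (χ i (s i)) ≤ β / 8 + β / 8 := by
          rcases ht.eq_or_lt with h0 | h0
          · -- t = 0, i = 0
            have hi0 : i = 0 := by rw [hidef, ← h0, hj00]
            have hu_eq : u = s 0 := by
              rw [hudef, hi0, ← h0, hasucc 0, ha0]; ring
            have hΦt : Φ t = z := by rw [← h0, hΦ0]
            have hm1 : dist (χ 0 (0 + u)) (S.f u (χ 0 0)) < εs 0 := (hmot 0).2 0 le_rfl u huIcc
            rw [zero_add] at hm1
            have hm2 : dist (S.f u (χ 0 0)) (S.f u z) ≤ β / 8 :=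
              hρuc _ _ ((hd0 0).trans (min_le_left _ _)) u huIcc
            rw [hΦt, hi0, ← hu_eq]
            calc dist (S.f u z) (χ 0 u)
                ≤ dist (S.f u z) (S.f u (χ 0 0)) + dist (S.f u (χ 0 0)) (χ 0 u) :=
                  dist_triangle _ _ _
              _ ≤ β / 8 + β / 8 := by
                  rw [dist_comm (S.f u z) (S.f u (χ 0 0)), dist_comm (S.f u (χ 0 0)) (χ 0 u)]
                  linarith [hm1, hm2, hεe 0]
          · -- t > 0
            have harg : 0 ≤ t - a i := by linarith [hj2 t ht]
            have hm1 := (hmot i).2 (t - a i) harg u huIcc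
            have hargeq : t - a i + u = s i := by
              rw [hudef, hasucc i]; ring
            rw [hargeq] at hm1
            have e1 : Φ t = χ i (t - a i) := hΦpos t h0
            rw [e1, dist_comm]
            have := hεe i
            linarith [hm1]
        -- step 2 : f u (Φ t) is β-close to χ (i+1) 0
        have h2 : dist (S.f u (Φ t)) (χ (i + 1) 0) ≤ β := by
          have d1 : dist (χ i (s i)) z ≤ ρ := (hds i).trans (min_le_left _ _)
          have d2 : dist (χ (i + 1) 0) z ≤ ρ := (hd0 (i + 1)).trans (min_le_left _ _)
          calc dist (S.f u (Φ t)) (χ (i + 1) 0)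
              ≤ dist (S.f u (Φ t)) (χ i (s i)) + dist (χ i (s i)) z + dist z (χ (i + 1) 0) :=
                dist_triangle4 _ _ _ _
            _ ≤ (β / 8 + β / 8) + ρ + ρ := by
                rw [dist_comm z (χ (i + 1) 0)]
                linarith [h1, d1, d2]
            _ ≤ β := by linarith [hρβ, hβ.le]
        -- step 3 : apply flow to both
        have h3 : dist (S.f v (S.f u (Φ t))) (S.f v (χ (i + 1) 0)) ≤ η :=
          hβuc _ _ h2 v hvIcc
        -- step 4 : semigroup
        have h4 : S.f v (S.f u (Φ t)) = S.f τ (Φ t) := by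
          rw [S.semigroup v u hv0 hu0'.le]
          congr 1
          rw [hvdef, hudef]; ring
        -- step 5 : induction hypothesis from a (i+1)
        have hteq : a (i + 1) + v = t + τ := by rw [hvdef]; ring
        have h5 : dist (Φ (a (i + 1) + v)) (S.f v (Φ (a (i + 1)))) ≤ β / 8 + β / 8 + (m:ℝ) * η := by
          apply ih (a (i + 1)) (hanneg _) v hvIcc
          rw [hteq, hja (i + 1)]
          omega
        have h6 : Φ (a (i + 1)) = χ (i + 1) 0 := hΦa (i + 1) (by omega)
        rw [h6] at h5
        rw [hteq] at h5
        calc dist (Φ (t + τ)) (S.f τ (Φ t))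
            ≤ dist (Φ (t + τ)) (S.f v (χ (i + 1) 0)) + dist (S.f v (χ (i + 1) 0)) (S.f τ (Φ t)) :=
              dist_triangle _ _ _
          _ ≤ (β / 8 + β / 8 + (m:ℝ) * η) + η := by
              rw [← h4, dist_comm (S.f v (χ (i + 1) 0)) (S.f v (S.f u (Φ t)))]
              linarith [h5, h3]
          _ ≤ β / 8 + β / 8 + ((m:ℕ) + 1 : ℕ) * η := by push_cast; linarith
  -- the breakpoint count is bounded by D
  have hcount : ∀ t : ℝ, 0 ≤ t → ∀ τ, τ ∈ Icc (0:ℝ) T → jdx (t + τ) ≤ jdx t + D := by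
    intro t ht τ hτ
    by_cases hcs : jdx (t + τ) ≤ jdx t
    · exact hcs.trans (Nat.le_add_right _ _)
    · push_neg at hcs
      have hij : jdx t + 1 ≤ jdx (t + τ) := hcs
      have h1 := hgap (jdx t + 1) (jdx (t + τ)) hij
      have h2 : a (jdx (t + τ)) ≤ t + τ := hj2 _ (by linarith [hτ.1])
      have h3 : t < a (jdx t + 1) := hj1 t
      have h4 : ((jdx (t + τ) - (jdx t + 1) : ℕ):ℝ) * σ ≤ T := by linarith [hτ.2]
      have h5 : ((jdx (t + τ) - (jdx t + 1) : ℕ):ℝ) ≤ (⌈T / σ⌉₊ : ℝ) := by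
        have := (le_div_iff₀ hσ0).2 h4
        exact this.trans (Nat.le_ceil _)
      have h6 : (jdx (t + τ) - (jdx t + 1) : ℕ) ≤ ⌈T / σ⌉₊ := by exact_mod_cast h5
      omega
  -- Φ is an ε₀-motion from z
  have hmotΦ : S.IsEpsMotion T ε₀ z Φ := by
    refine ⟨hΦ0, fun t ht τ hτ => ?_⟩
    have h := main D t ht τ hτ (hcount t ht τ hτ)
    have h2 : β / 8 ≤ η := by linarith [hβη, hβ]
    have hval : ((D:ℝ) + 2) * η = ε₀ / 2 := by
      rw [hηdef]
      field_simp
    have hDη : β / 8 + β / 8 + (D:ℝ) * η ≤ ε₀ / 2 := by nlinarith [hval]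
    linarith [h]
  -- conclusion
  refine ⟨Φ, hmotΦ, fun n => a (n + 1), fun n => hanneg _, ?_, ?_⟩
  · have h1 : Tendsto (fun n : ℕ => (n:ℝ)) atTop atTop := tendsto_natCast_atTop_atTop
    have h2 : Tendsto (fun n : ℕ => (n:ℝ) + 1) atTop atTop :=
      tendsto_atTop_add_const_right _ 1 h1
    have h3 : Tendsto (fun n : ℕ => ((n:ℝ) + 1) * σ) atTop atTop := h2.atTop_mul_const hσ0
    refine tendsto_atTop_mono (fun n => ?_) h3
    have := hage (n + 1)
    push_cast at this
    linarith
  · rw [tendsto_iff_dist_tendsto_zero]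
    apply squeeze_zero (fun n => dist_nonneg) (g := fun n : ℕ => 1 / ((n:ℝ) + 1))
    · intro n
      rw [hΦa (n + 1) (by omega)]
      have h1 := (hd0 (n + 1)).trans (min_le_right _ _)
      have h2 : 1 / (((n + 1 : ℕ):ℝ) + 1) ≤ 1 / ((n:ℝ) + 1) := by
        apply one_div_le_one_div_of_le
        · positivity
        · push_cast; linarith
      exact h1.trans h2
    · exact tendsto_one_div_add_atTop_nhds_zero_nat

end Semiflow

namespace Semiflow

variable {X : Type*} [MetricSpace X] [CompactSpace X] (S : Semiflow X)

set_option maxHeartbeats 1000000 in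
/-- Key lemma: it is impossible that for every `δ, M` there is an `ε ≤ δ` and an
`ε`-motion spending time of measure at least `M` at distance `≥ γ` from `ω^ε_f`. -/
lemma key (T : ℝ) (hT : 0 < T) (γ : ℝ) (hγ : 0 < γ)
    (H : ∀ δ > (0:ℝ), ∀ M : ℝ, ∃ (ε : ℝ) (x : X) (φ : ℝ → X), 0 < ε ∧ ε ≤ δ ∧
        S.IsEpsMotion T ε x φ ∧
        ENNReal.ofReal M ≤ volume {t : ℝ | 0 ≤ t ∧ γ ≤ infDist (φ t) (S.omegaEpsF T ε)}) :
    False := by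
  classical
  obtain ⟨σ, hσ0, hσT, hσ⟩ := S.ucTime T hT (γ / 2) (by positivity)
  -- step Q : returns of far points
  have Q : ∀ r > (0:ℝ), ∀ δ > (0:ℝ), ∃ (ε : ℝ) (χ : ℝ → X), 0 < ε ∧ ε ≤ δ ∧
      S.IsEpsMotion T ε (χ 0) χ ∧ γ / 4 ≤ infDist (χ 0) (S.omegaEpsF T ε) ∧
      ∃ s, σ ≤ s ∧ dist (χ 0) (χ s) ≤ 2 * r := by
    intro r hr δ hδ
    obtain ⟨C, hCfin, hCcov⟩ :=
      (Metric.totallyBounded_iff.1 (isCompact_univ : IsCompact (univ : Set X)).totallyBounded) r hr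
    set N := hCfin.toFinset.card with hNdef
    obtain ⟨ε, x, φ, hε0, hεδ, hmot, hvol⟩ :=
      H (min δ (γ / 4)) (lt_min hδ (by positivity)) (((N:ℝ) + 2) * σ + 1)
    set A := S.omegaEpsF T ε with hAdef
    set G : Set ℕ := {k | 1 ≤ k ∧ γ / 4 ≤ infDist (φ ((k:ℝ) * σ)) A} with hGdef
    have hεγ : ε ≤ γ / 4 := hεδ.trans (min_le_right _ _)
    -- far times are covered by grid intervals with far grid point
    have hincl : {t : ℝ | 0 ≤ t ∧ γ ≤ infDist (φ t) A} ⊆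
        {0} ∪ ⋃ k ∈ G, Ioc ((k:ℝ) * σ - σ) ((k:ℝ) * σ) := by
      rintro t ⟨ht0, htfar⟩
      rcases ht0.eq_or_lt with rfl | htpos
      · exact Or.inl rfl
      · right
        set k := ⌈t / σ⌉₊ with hk
        have hk1 : 1 ≤ k := Nat.one_le_iff_ne_zero.2 (by
          simp only [hk, ne_eq, Nat.ceil_eq_zero, not_le]
          exact div_pos htpos hσ0)
        have hkt : t ≤ (k:ℝ) * σ := by
          have h := Nat.le_ceil (t / σ)
          calc t = (t / σ) * σ := by field_simp
            _ ≤ (k:ℝ) * σ := by nlinarith [h]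
        have hkt' : (k:ℝ) * σ - σ < t := by
          have h2 : (k:ℝ) < t / σ + 1 := by
            have := Nat.ceil_lt_add_one (le_of_lt (div_pos htpos hσ0))
            exact_mod_cast this
          have h3 : t / σ * σ = t := by field_simp
          nlinarith [h2]
        have hs0 : 0 ≤ (k:ℝ) * σ - t := by linarith
        have hsσ' : (k:ℝ) * σ - t ≤ σ := by linarith
        have hm := hmot.2 t ht0 ((k:ℝ) * σ - t) ⟨hs0, hsσ'.trans hσT⟩
        have harg : t + ((k:ℝ) * σ - t) = (k:ℝ) * σ := by ring
        rw [harg] at hm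
        have hm2 : dist (S.f ((k:ℝ) * σ - t) (φ t)) (φ t) ≤ γ / 2 := hσ (φ t) _ hs0 hsσ'
        have hdd : dist (φ ((k:ℝ) * σ)) (φ t) ≤ ε + γ / 2 := by
          calc dist (φ ((k:ℝ) * σ)) (φ t)
              ≤ dist (φ ((k:ℝ) * σ)) (S.f ((k:ℝ) * σ - t) (φ t)) +
                dist (S.f ((k:ℝ) * σ - t) (φ t)) (φ t) := dist_triangle _ _ _
            _ ≤ ε + γ / 2 := by linarith [hm, hm2]
        have hkfar : γ / 4 ≤ infDist (φ ((k:ℝ) * σ)) A := by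
          have hle : infDist (φ t) A ≤ infDist (φ ((k:ℝ) * σ)) A + dist (φ t) (φ ((k:ℝ) * σ)) :=
            infDist_le_infDist_add_dist
          rw [dist_comm] at hle
          linarith [htfar, hdd, hεγ]
        exact mem_biUnion (show k ∈ G from ⟨hk1, hkfar⟩) ⟨hkt', hkt⟩
    -- there are at least N + 1 far grid points
    have hcard : ∃ Sfin : Finset ℕ, Sfin.card = N + 1 ∧ ∀ k ∈ Sfin, k ∈ G := by
      by_cases hGf : G.Finite
      · rcases le_or_gt (N + 1) hGf.toFinset.card with hle | hlt
        · obtain ⟨Sfin, hsub, hcardeq⟩ := Finset.exists_subset_card_eq hle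
          exact ⟨Sfin, hcardeq, fun k hk => hGf.mem_toFinset.1 (hsub hk)⟩
        · exfalso
          have hcardle : hGf.toFinset.card ≤ N := by omega
          have hGeq : (⋃ k ∈ G, Ioc ((k:ℝ) * σ - σ) ((k:ℝ) * σ)) =
              ⋃ k ∈ hGf.toFinset, Ioc ((k:ℝ) * σ - σ) ((k:ℝ) * σ) := by
            ext u
            simp [Set.Finite.mem_toFinset]
          have hb : volume {t : ℝ | 0 ≤ t ∧ γ ≤ infDist (φ t) A} ≤
              volume ({(0:ℝ)} : Set ℝ) +
                volume (⋃ k ∈ hGf.toFinset, Ioc ((k:ℝ) * σ - σ) ((k:ℝ) * σ)) := by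
            rw [← hGeq]
            exact (measure_mono hincl).trans (measure_union_le _ _)
          have hb2 : volume (⋃ k ∈ hGf.toFinset, Ioc ((k:ℝ) * σ - σ) ((k:ℝ) * σ)) ≤
              ∑ k ∈ hGf.toFinset, volume (Ioc ((k:ℝ) * σ - σ) ((k:ℝ) * σ)) :=
            measure_biUnion_finset_le _ _
          have hval : ∀ k : ℕ, volume (Ioc ((k:ℝ) * σ - σ) ((k:ℝ) * σ)) = ENNReal.ofReal σ := by
            intro k
            rw [Real.volume_Ioc]
            congr 1
            ring
          have hb3 : ∑ k ∈ hGf.toFinset, volume (Ioc ((k:ℝ) * σ - σ) ((k:ℝ) * σ)) =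
              (hGf.toFinset.card : ℝ≥0∞) * ENNReal.ofReal σ := by
            simp [hval, Finset.sum_const, nsmul_eq_mul]
          have hb4 : (hGf.toFinset.card : ℝ≥0∞) * ENNReal.ofReal σ ≤
              (N : ℝ≥0∞) * ENNReal.ofReal σ :=
            mul_le_mul_left (by exact_mod_cast hcardle) _
          have hb5 : (N : ℝ≥0∞) * ENNReal.ofReal σ = ENNReal.ofReal ((N:ℝ) * σ) := by
            rw [ENNReal.ofReal_mul (by positivity)]
            congr 1
            exact (ENNReal.ofReal_natCast N).symm
          have hfin : ENNReal.ofReal (((N:ℝ) + 2) * σ + 1) ≤ ENNReal.ofReal ((N:ℝ) * σ) := by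
            calc ENNReal.ofReal (((N:ℝ) + 2) * σ + 1)
                ≤ volume {t : ℝ | 0 ≤ t ∧ γ ≤ infDist (φ t) A} := hvol
              _ ≤ volume ({(0:ℝ)} : Set ℝ) + ∑ k ∈ hGf.toFinset,
                    volume (Ioc ((k:ℝ) * σ - σ) ((k:ℝ) * σ)) := hb.trans (by
                      exact add_le_add_right hb2 _)
              _ = (hGf.toFinset.card : ℝ≥0∞) * ENNReal.ofReal σ := by
                  rw [measure_singleton, zero_add, hb3]
              _ ≤ ENNReal.ofReal ((N:ℝ) * σ) := by rw [← hb5]; exact hb4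
          rw [ENNReal.ofReal_le_ofReal_iff (by positivity)] at hfin
          nlinarith [hfin, hσ0]
      · obtain ⟨Sfin, hsub, hcardeq⟩ := (show G.Infinite from hGf).exists_subset_card_eq (N + 1)
        exact ⟨Sfin, hcardeq, fun k hk => hsub hk⟩
    obtain ⟨Sfin, hScard, hSG⟩ := hcard
    -- pigeonhole on the ball cover
    have hmaps : ∀ k : ℕ, ∃ c, c ∈ hCfin.toFinset ∧ φ ((k:ℝ) * σ) ∈ ball c r := by
      intro k
      have hx := hCcov (mem_univ (φ ((k:ℝ) * σ)))
      obtain ⟨c, hc, hmem⟩ := mem_iUnion₂.1 hx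
      exact ⟨c, hCfin.mem_toFinset.2 hc, hmem⟩
    choose g hg1 hg2 using hmaps
    obtain ⟨k, hkS, k', hk'S, hkk', hgeq⟩ :=
      Finset.exists_ne_map_eq_of_card_lt_of_maps_to
        (show hCfin.toFinset.card < Sfin.card by rw [hScard, ← hNdef]; omega)
        (fun k _ => hg1 k)
    have build : ∀ k₁ k₂ : ℕ, k₁ ∈ Sfin → k₂ ∈ Sfin → k₁ < k₂ → g k₁ = g k₂ →
        ∃ (ε' : ℝ) (χ : ℝ → X), 0 < ε' ∧ ε' ≤ δ ∧ S.IsEpsMotion T ε' (χ 0) χ ∧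
          γ / 4 ≤ infDist (χ 0) (S.omegaEpsF T ε') ∧
          ∃ s, σ ≤ s ∧ dist (χ 0) (χ s) ≤ 2 * r := by
      intro k₁ k₂ hm1 hm2 hlt heq
      have hG1 := hSG _ hm1
      have hG2 := hSG _ hm2
      have hd : dist (φ ((k₁:ℝ) * σ)) (φ ((k₂:ℝ) * σ)) ≤ 2 * r := by
        have b1 := hg2 k₁
        have b2 := hg2 k₂
        rw [heq] at b1
        rw [mem_ball] at b1 b2
        calc dist (φ ((k₁:ℝ) * σ)) (φ ((k₂:ℝ) * σ))
            ≤ dist (φ ((k₁:ℝ) * σ)) (g k₂) + dist (g k₂) (φ ((k₂:ℝ) * σ)) := dist_triangle _ _ _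
          _ ≤ 2 * r := by
              rw [dist_comm (g k₂) (φ ((k₂:ℝ) * σ))]
              linarith [b1, b2]
      have ha0 : (0:ℝ) ≤ (k₁:ℝ) * σ := by positivity
      have hshift := hmot.shift (a := (k₁:ℝ) * σ) ha0
      refine ⟨ε, fun u => φ ((k₁:ℝ) * σ + u), hε0, hεδ.trans (min_le_left _ _), ?_, ?_, ?_⟩
      · simpa using hshift
      · show γ / 4 ≤ infDist (φ ((k₁:ℝ) * σ + 0)) A
        rw [add_zero]
        exact hG1.2
      · refine ⟨(k₂:ℝ) * σ - (k₁:ℝ) * σ, ?_, ?_⟩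
        · have hcast : (k₁:ℝ) + 1 ≤ (k₂:ℝ) := by exact_mod_cast hlt
          nlinarith [hσ0]
        · show dist (φ ((k₁:ℝ) * σ + 0)) (φ ((k₁:ℝ) * σ + ((k₂:ℝ) * σ - (k₁:ℝ) * σ))) ≤ 2 * r
          have harg1 : (k₁:ℝ) * σ + 0 = (k₁:ℝ) * σ := by ring
          have harg2 : (k₁:ℝ) * σ + ((k₂:ℝ) * σ - (k₁:ℝ) * σ) = (k₂:ℝ) * σ := by ring
          rw [harg1, harg2]
          exact hd
    rcases hkk'.lt_or_gt with hcase | hcase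
    · exact build k k' hkS hk'S hcase hgeq
    · exact build k' k hk'S hkS hcase hgeq.symm
  -- extract the recurrent point z
  have hQseq : ∀ i : ℕ, ∃ (ε : ℝ) (χ : ℝ → X), 0 < ε ∧ ε ≤ 1 / ((i:ℝ) + 1) ∧
      S.IsEpsMotion T ε (χ 0) χ ∧ γ / 4 ≤ infDist (χ 0) (S.omegaEpsF T ε) ∧
      ∃ s, σ ≤ s ∧ dist (χ 0) (χ s) ≤ 2 * (1 / ((i:ℝ) + 1)) :=
    fun i => Q (1 / ((i:ℝ) + 1)) (by positivity) (1 / ((i:ℝ) + 1)) (by positivity)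
  choose εs χs hε0 hεsm hmots hfars ss hsσ' hsd using hQseq
  obtain ⟨z, -, g, hgmono, hgconv⟩ :=
    (isCompact_univ : IsCompact (univ : Set X)).tendsto_subseq (fun i => mem_univ (χs i 0))
  -- z satisfies the hypothesis of the chain lemma
  have hz : ∀ ρ > (0:ℝ), ∀ δ > (0:ℝ), ∃ (ε : ℝ) (χ : ℝ → X), 0 < ε ∧ ε ≤ δ ∧
      S.IsEpsMotion T ε (χ 0) χ ∧ dist (χ 0) z ≤ ρ ∧ ∃ s, σ ≤ s ∧ dist (χ s) z ≤ ρ := by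
    intro ρ hρ δ hδ
    obtain ⟨k₀, hk₀⟩ := exists_nat_one_div_lt (lt_min (show (0:ℝ) < ρ/4 by linarith) hδ)
    have hev : ∀ᶠ k in atTop, dist (χs (g k) 0) z ≤ ρ / 2 := by
      have hball := hgconv.eventually (Metric.closedBall_mem_nhds z (show (0:ℝ) < ρ/2 by linarith))
      filter_upwards [hball] with k hk
      exact mem_closedBall.1 hk
    obtain ⟨k, hkd, hk⟩ := (hev.and (eventually_ge_atTop k₀)).exists
    set i := g k with hidef
    have hik : k₀ ≤ i := hk.trans (hgmono.le_apply)
    have hsmall : 1 / ((i:ℝ) + 1) ≤ min (ρ/4) δ := by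
      have h1 : 1 / ((i:ℝ) + 1) ≤ 1 / ((k₀:ℝ) + 1) := by
        apply one_div_le_one_div_of_le
        · positivity
        · exact_mod_cast Nat.succ_le_succ hik
      exact h1.trans hk₀.le
    refine ⟨εs i, χs i, hε0 i, (hεsm i).trans (hsmall.trans (min_le_right _ _)), hmots i, ?_, ?_⟩
    · exact hkd.trans (by linarith)
    · refine ⟨ss i, hsσ' i, ?_⟩
      have h1 := hsd i
      have h2 : 1 / ((i:ℝ) + 1) ≤ ρ / 4 := hsmall.trans (min_le_left _ _)
      calc dist (χs i (ss i)) z ≤ dist (χs i (ss i)) (χs i 0) + dist (χs i 0) z :=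
            dist_triangle _ _ _
        _ ≤ ρ := by
            rw [dist_comm (χs i (ss i)) (χs i 0)]
            linarith [h1, hkd]
  -- choose an index far from z's chain-ω-limit obstruction
  have hev2 : ∀ᶠ k in atTop, dist (χs (g k) 0) z ≤ γ / 8 := by
    have hball := hgconv.eventually (Metric.closedBall_mem_nhds z (show (0:ℝ) < γ/8 by linarith))
    filter_upwards [hball] with k hk
    exact mem_closedBall.1 hk
  obtain ⟨k, hk⟩ := hev2.exists
  have hfar : γ / 8 ≤ infDist z (S.omegaEpsF T (εs (g k))) := by
    have h1 := hfars (g k)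
    have h2 : infDist (χs (g k) 0) (S.omegaEpsF T (εs (g k))) ≤
        infDist z (S.omegaEpsF T (εs (g k))) + dist (χs (g k) 0) z :=
      infDist_le_infDist_add_dist
    linarith [hk]
  have hmem := S.chain T hT hσ0 hσT z hz (hε0 (g k))
  have hzero : infDist z (S.omegaEpsF T (εs (g k))) = 0 :=
    infDist_zero_of_mem (mem_iUnion.2 ⟨z, hmem⟩)
  rw [hzero] at hfar
  linarith

end Semiflow

/-- Theorem 4.5: η₁⁰- and η₂⁰-slow relaxations are impossible for one semiflow. -/
theorem no_eta1Zero_eta2Zero_slow {X : Type*} [MetricSpace X] [CompactSpace X]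
    (S : Semiflow X) (T : ℝ) (hT : 0 < T) :
    (¬ ∃ γ > (0:ℝ), ∃ (ε : ℕ → ℝ) (xs : ℕ → X) (φ : ℕ → ℝ → X),
        (∀ j, 0 < ε j) ∧ Tendsto ε atTop (𝓝 0) ∧
        (∀ j, S.IsEpsMotion T (ε j) (xs j) (φ j)) ∧
        Tendsto (fun j => S.eta1Eps T (ε j) (φ j) γ) atTop atTop) ∧
    (¬ ∃ γ > (0:ℝ), ∃ (ε : ℕ → ℝ) (xs : ℕ → X) (φ : ℕ → ℝ → X),
        (∀ j, 0 < ε j) ∧ Tendsto ε atTop (𝓝 0) ∧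
        (∀ j, S.IsEpsMotion T (ε j) (xs j) (φ j)) ∧
        Tendsto (fun j => S.eta2Eps T (ε j) (φ j) γ) atTop (𝓝 ⊤)) := by
  constructor
  · rintro ⟨γ, hγ, ε, xs, φ, hεpos, hεlim, hmot, hη⟩
    refine S.key T hT γ hγ ?_
    intro δ hδ M
    have h1 : ∀ᶠ j in atTop, ε j < δ := hεlim.eventually_lt_const hδ
    have h2 : ∀ᶠ j in atTop, M + 1 ≤ S.eta1Eps T (ε j) (φ j) γ :=
      hη.eventually_ge_atTop (M + 1)
    obtain ⟨j, hj1, hj2⟩ := (h1.and h2).exists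
    refine ⟨ε j, xs j, φ j, hεpos j, hj1.le, hmot j, ?_⟩
    rcases le_or_gt M 0 with hM | hM
    · rw [ENNReal.ofReal_of_nonpos hM]
      exact zero_le
    · have hsub : Ico (0:ℝ) M ⊆
          {t : ℝ | 0 ≤ t ∧ γ ≤ infDist (φ j t) (S.omegaEpsF T (ε j))} := by
        rintro t ⟨ht0, htM⟩
        refine ⟨ht0, ?_⟩
        by_contra hlt
        push_neg at hlt
        have hmem : t ∈ {u : ℝ | 0 ≤ u ∧ infDist (φ j u) (S.omegaEpsF T (ε j)) < γ} :=
          ⟨ht0, hlt⟩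
        have hbdd : BddBelow {u : ℝ | 0 ≤ u ∧ infDist (φ j u) (S.omegaEpsF T (ε j)) < γ} :=
          ⟨0, fun u hu => hu.1⟩
        have hle : S.eta1Eps T (ε j) (φ j) γ ≤ t := csInf_le hbdd hmem
        linarith
      calc ENNReal.ofReal M = volume (Ico (0:ℝ) M) := by rw [Real.volume_Ico, sub_zero]
        _ ≤ _ := measure_mono hsub
  · rintro ⟨γ, hγ, ε, xs, φ, hεpos, hεlim, hmot, hη⟩
    refine S.key T hT γ hγ ?_
    intro δ hδ M
    have h1 : ∀ᶠ j in atTop, ε j < δ := hεlim.eventually_lt_const hδ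
    have h2 : ∀ᶠ j in atTop, S.eta2Eps T (ε j) (φ j) γ ∈ Ioi (ENNReal.ofReal M) :=
      hη.eventually (Ioi_mem_nhds ENNReal.ofReal_lt_top)
    obtain ⟨j, hj1, hj2⟩ := (h1.and h2).exists
    exact ⟨ε j, xs j, φ j, hεpos j, hj1.le, hmot j, le_of_lt hj2⟩
end

section
/- For every x ∈ X and k ∈ K, the set ω⁰(x,k) is closed in X and is invariant: for every y ∈ ω⁰(x,k) there is a map φ : ℝ → X with φ(0) = y, f(t, φ(s), k) = φ(s+t) for all s ∈ ℝ and t ≥ 0, and φ(ℝ) ⊆ ω⁰(x,k). -/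
open Filter Topology Metric Set MeasureTheory
open scoped ENNReal

/-- A parameter-dependent semiflow on a metric space `X` with parameter space `K`:
a map `f : [0,∞) × X × K → X` (encoded with time in `ℝ`, with conditions only for
nonnegative times), continuous on `[0,∞) × X × K`, satisfying the semigroup
identities, and injective in `x` for each fixed time and parameter. -/
structure PSemiflow (X K : Type*) [MetricSpace X] [MetricSpace K] where
  f : ℝ → X → K → X
  cont : ContinuousOn (fun p : ℝ × X × K => f p.1 p.2.1 p.2.2) {p : ℝ × X × K | 0 ≤ p.1}
  map_zero : ∀ x k, f 0 x k = x
  semigroup : ∀ t t' : ℝ, 0 ≤ t → 0 ≤ t' → ∀ x k, f t (f t' x k) k = f (t + t') x k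
  inj : ∀ t : ℝ, 0 ≤ t → ∀ k, Function.Injective fun x => f t x k

namespace PSemiflow

variable {X K : Type*} [MetricSpace X] [MetricSpace K] (S : PSemiflow X K)

/-- The ω-limit set `ω(x,k)`: all limits of `f(tₙ,x,k)` along sequences `tₙ → ∞`. -/
def omega (x : X) (k : K) : Set X :=
  {y | ∃ t : ℕ → ℝ, (∀ n, 0 ≤ t n) ∧ Tendsto t atTop atTop ∧
      Tendsto (fun n => S.f (t n) x k) atTop (𝓝 y)}

/-- The complete ω-limit set `ω(k) = ⋃ₓ ω(x,k)`. -/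
def omegaK (k : K) : Set X := ⋃ x : X, S.omega x k

/-- A `(k,x,ε)`-motion (with time scale `T`): a perturbed motion which on every
interval of length `T` departs from the true motion by less than `ε`. -/
def IsEpsMotion (T ε : ℝ) (k : K) (x : X) (φ : ℝ → X) : Prop :=
  φ 0 = x ∧ ∀ t : ℝ, 0 ≤ t → ∀ τ ∈ Icc (0:ℝ) T, dist (φ (t + τ)) (S.f τ (φ t) k) < ε

/-- `ω^ε(x,k)`: ω-limit points of all `(k,x,ε)`-motions. -/
def omegaEps (T ε : ℝ) (x : X) (k : K) : Set X :=
  {y | ∃ φ : ℝ → X, S.IsEpsMotion T ε k x φ ∧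
      ∃ t : ℕ → ℝ, (∀ n, 0 ≤ t n) ∧ Tendsto t atTop atTop ∧
        Tendsto (fun n => φ (t n)) atTop (𝓝 y)}

/-- `ω⁰(x,k) = ⋂_{ε>0} ω^ε(x,k)`. -/
def omegaZero (T : ℝ) (x : X) (k : K) : Set X := ⋂ ε > (0:ℝ), S.omegaEps T ε x k

end PSemiflow

namespace PSemiflow

variable {X K : Type*} [MetricSpace X] [MetricSpace K] (S : PSemiflow X K)

lemma slice_cont {τ : ℝ} (hτ : 0 ≤ τ) (k : K) :
    Continuous fun x : X => S.f τ x k := by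
  have h : Continuous fun x : X => ((τ, x, k) : ℝ × X × K) := by continuity
  exact S.cont.comp_continuous h fun x => hτ

lemma uc [CompactSpace X] (T : ℝ) (k : K) {ε : ℝ} (hε : 0 < ε) :
    ∃ δ > 0, ∀ τ ∈ Icc (0:ℝ) T, ∀ x₁ x₂ : X, dist x₁ x₂ < δ →
      dist (S.f τ x₁ k) (S.f τ x₂ k) < ε := by
  have hcs : IsCompact (Icc (0:ℝ) T ×ˢ (univ : Set X)) := isCompact_Icc.prod isCompact_univ
  have hcont : ContinuousOn (fun p : ℝ × X => S.f p.1 p.2 k) (Icc (0:ℝ) T ×ˢ univ) := by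
    have h1 : Continuous fun p : ℝ × X => ((p.1, p.2, k) : ℝ × X × K) := by continuity
    exact S.cont.comp h1.continuousOn fun p hp => hp.1.1
  have huc := hcs.uniformContinuousOn_of_continuous hcont
  rw [Metric.uniformContinuousOn_iff] at huc
  obtain ⟨δ, hδ, H⟩ := huc ε hε
  refine ⟨δ, hδ, fun τ hτ x₁ x₂ h => ?_⟩
  have := H (τ, x₁) ⟨hτ, mem_univ _⟩ (τ, x₂) ⟨hτ, mem_univ _⟩ ?_
  · exact this
  · rw [Prod.dist_eq]
    simpa [dist_self, max_eq_right dist_nonneg] using h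

lemma omegaEps_mono (T : ℝ) {ε₁ ε₂ : ℝ} (h : ε₁ ≤ ε₂) (x : X) (k : K) :
    S.omegaEps T ε₁ x k ⊆ S.omegaEps T ε₂ x k := by
  rintro y ⟨φ, ⟨hφ0, hφ⟩, t, ht0, htop, hconv⟩
  exact ⟨φ, ⟨hφ0, fun t' ht' τ hτ => lt_of_lt_of_le (hφ t' ht' τ hτ) h⟩, t, ht0, htop, hconv⟩

lemma mem_omegaZero_iff (T : ℝ) (x : X) (k : K) {y : X} :
    y ∈ S.omegaZero T x k ↔ ∀ ε > (0:ℝ), y ∈ S.omegaEps T ε x k := by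
  simp [omegaZero]

lemma key [CompactSpace X] (T : ℝ) (x : X) (k : K) {ε : ℝ} (hε : 0 < ε) :
    ∃ δ > 0, ∀ y y' : X, y' ∈ S.omegaEps T (ε/2) x k → dist y y' < δ →
      y ∈ S.omegaEps T ε x k := by
  classical
  obtain ⟨δ₀, hδ₀, hU⟩ := S.uc T k (show (0:ℝ) < ε/8 by linarith)
  set δ := min δ₀ (ε/8) with hδdef
  have hδpos : 0 < δ := lt_min hδ₀ (by linarith)
  refine ⟨δ, hδpos, fun y y' hy' hdy => ?_⟩
  obtain ⟨φ, ⟨hφ0, hφ⟩, t, ht0, htop, hconv⟩ := hy'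
  obtain ⟨N₁, hN₁⟩ := Metric.tendsto_atTop.mp hconv (δ - dist y y') (by linarith)
  obtain ⟨N₂, hN₂⟩ := eventually_atTop.mp (htop.eventually_ge_atTop 1)
  set N := max N₁ N₂ with hN
  set ψ : ℝ → X := fun s => if ∃ n, N ≤ n ∧ t n = s then y else φ s with hψdef
  have hdistψ : ∀ s, dist (ψ s) (φ s) < δ := by
    intro s
    by_cases h : ∃ n, N ≤ n ∧ t n = s
    · obtain ⟨n, hn, rfl⟩ := h
      have h1 : dist (φ (t n)) y' < δ - dist y y' := hN₁ n (le_trans (le_max_left _ _) hn)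
      have h2 : ψ (t n) = y := if_pos ⟨n, hn, rfl⟩
      rw [h2]
      calc dist y (φ (t n)) ≤ dist y y' + dist y' (φ (t n)) := dist_triangle _ _ _
        _ < δ := by rw [dist_comm y' (φ (t n))]; linarith
    · have : ψ s = φ s := if_neg h
      rw [this, dist_self]; exact hδpos
  refine ⟨ψ, ⟨?_, ?_⟩, fun n => t (n + N), fun n => ht0 _, htop.comp (tendsto_add_atTop_nat N), ?_⟩
  · have h0 : ¬ ∃ n, N ≤ n ∧ t n = 0 := by
      rintro ⟨n, hn, h0⟩
      have := hN₂ n (le_trans (le_max_right _ _) hn)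
      rw [h0] at this; linarith
    show ψ 0 = x
    rw [hψdef]; simp only [if_neg h0]; exact hφ0
  · intro t₀ ht₀ τ hτ
    have d1 := hdistψ (t₀ + τ)
    have d2 := hφ t₀ ht₀ τ hτ
    have d3 : dist (S.f τ (φ t₀) k) (S.f τ (ψ t₀) k) < ε/8 := by
      apply hU τ hτ
      rw [dist_comm]
      exact lt_of_lt_of_le (hdistψ t₀) (min_le_left _ _)
    have hδ8 : δ ≤ ε/8 := min_le_right _ _
    calc dist (ψ (t₀ + τ)) (S.f τ (ψ t₀) k)
        ≤ dist (ψ (t₀ + τ)) (φ (t₀ + τ)) + dist (φ (t₀ + τ)) (S.f τ (φ t₀) k)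
            + dist (S.f τ (φ t₀) k) (S.f τ (ψ t₀) k) := dist_triangle4 _ _ _ _
      _ < ε := by linarith
  · have hval : ∀ n, ψ (t (n + N)) = y := fun n => if_pos ⟨n + N, Nat.le_add_left _ _, rfl⟩
    have heq : (fun n => ψ ((fun n => t (n + N)) n)) = fun _ => y := funext hval
    show Tendsto (fun n => ψ ((fun n => t (n + N)) n)) atTop (𝓝 y)
    rw [heq]; exact tendsto_const_nhds

lemma omegaZero_isClosed [CompactSpace X] (T : ℝ) (x : X) (k : K) :
    IsClosed (S.omegaZero T x k) := by
  apply isClosed_of_closure_subset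
  intro y hy
  rw [S.mem_omegaZero_iff]
  intro ε hε
  obtain ⟨δ, hδ, hkey⟩ := S.key T x k hε
  obtain ⟨y', hy', hdist⟩ := Metric.mem_closure_iff.mp hy δ hδ
  exact hkey y y' ((S.mem_omegaZero_iff T x k).mp hy' (ε/2) (by linarith)) hdist

lemma fwd_step [CompactSpace X] (T : ℝ) (x : X) (k : K) {z : X} {τ : ℝ}
    (hz : z ∈ S.omegaZero T x k) (hτ : τ ∈ Icc (0:ℝ) T) :
    S.f τ z k ∈ S.omegaZero T x k := by
  rw [S.mem_omegaZero_iff]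
  intro ε hε
  obtain ⟨δ, hδ, hkey⟩ := S.key T x k hε
  set ε₁ := min (δ/2) (ε/2) with hε₁def
  have hε₁ : 0 < ε₁ := lt_min (by linarith) (by linarith)
  obtain ⟨φ, ⟨hφ0, hφ⟩, t, ht0, htop, hconv⟩ := (S.mem_omegaZero_iff T x k).mp hz ε₁ hε₁
  obtain ⟨w, -, σ, hσ, hwconv⟩ :=
    isCompact_univ.tendsto_subseq (x := fun n => φ (t n + τ)) (fun n => mem_univ _)
  have hwmem : w ∈ S.omegaEps T (ε/2) x k := by
    apply S.omegaEps_mono T (min_le_right (δ/2) (ε/2)) x k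
    refine ⟨φ, ⟨hφ0, hφ⟩, fun n => t (σ n) + τ, fun n => add_nonneg (ht0 _) hτ.1, ?_, hwconv⟩
    exact tendsto_atTop_add_const_right _ τ (htop.comp hσ.tendsto_atTop)
  have h2 : Tendsto (fun n => S.f τ (φ (t (σ n))) k) atTop (𝓝 (S.f τ z k)) :=
    (S.slice_cont hτ.1 k).continuousAt.tendsto.comp (hconv.comp hσ.tendsto_atTop)
  have h3 : ∀ n, dist (φ (t (σ n) + τ)) (S.f τ (φ (t (σ n))) k) ≤ ε₁ :=
    fun n => (hφ _ (ht0 _) τ hτ).le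
  have h5 : dist w (S.f τ z k) ≤ ε₁ :=
    le_of_tendsto (hwconv.dist h2) (Eventually.of_forall h3)
  refine hkey (S.f τ z k) w hwmem ?_
  rw [dist_comm]
  exact lt_of_le_of_lt h5 (lt_of_le_of_lt (min_le_left _ _) (by linarith))

lemma fwd [CompactSpace X] {T : ℝ} (hT : 0 < T) (x : X) (k : K) {z : X} {t : ℝ}
    (hz : z ∈ S.omegaZero T x k) (ht : 0 ≤ t) :
    S.f t z k ∈ S.omegaZero T x k := by
  obtain ⟨n, hn⟩ := exists_nat_ge (t / T)
  have htn : t ≤ n * T := by rw [div_le_iff₀ hT] at hn; linarith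
  clear hn
  induction n generalizing t z with
  | zero =>
    have : t = 0 := le_antisymm (by simpa using htn) ht
    rw [this, S.map_zero]; exact hz
  | succ n ih =>
    by_cases h : t ≤ T
    · exact S.fwd_step T x k hz ⟨ht, h⟩
    · push_neg at h
      have h1 : 0 ≤ t - T := by linarith
      have h2 : t - T ≤ n * T := by push_cast at htn ⊢; linarith
      have h3 := S.fwd_step T x k (ih hz h1 h2) (Set.mem_Icc.mpr ⟨hT.le, le_refl T⟩)
      rw [S.semigroup T (t - T) hT.le h1] at h3
      have : T + (t - T) = t := by ring
      rwa [this] at h3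

lemma pre_exists [CompactSpace X] {T : ℝ} (hT : 0 < T) (x : X) (k : K) {y : X} {ε : ℝ}
    (hy : y ∈ S.omegaEps T ε x k) :
    ∃ z ∈ S.omegaEps T ε x k, dist (S.f T z k) y ≤ ε := by
  obtain ⟨φ, ⟨hφ0, hφ⟩, t, ht0, htop, hconv⟩ := hy
  obtain ⟨N, hN⟩ := eventually_atTop.mp (htop.eventually_ge_atTop T)
  set u : ℕ → ℝ := fun n => t (n + N) with hu_def
  have hu : ∀ n, T ≤ u n := fun n => hN _ (Nat.le_add_left _ _)
  have hutop : Tendsto u atTop atTop := htop.comp (tendsto_add_atTop_nat N)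
  obtain ⟨z, -, σ, hσ, hzconv⟩ :=
    isCompact_univ.tendsto_subseq (x := fun n => φ (u n - T)) (fun n => mem_univ _)
  refine ⟨z, ⟨φ, ⟨hφ0, hφ⟩, fun n => u (σ n) - T, fun n => by show (0:ℝ) ≤ u (σ n) - T; linarith [hu (σ n)], ?_, hzconv⟩, ?_⟩
  · exact tendsto_atTop_add_const_right _ (-T) (hutop.comp hσ.tendsto_atTop)
  · have h2 : Tendsto (fun n => S.f T (φ (u (σ n) - T)) k) atTop (𝓝 (S.f T z k)) :=
      (S.slice_cont hT.le k).continuousAt.tendsto.comp hzconv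
    have hy2 : Tendsto (fun n => φ (u (σ n))) atTop (𝓝 y) :=
      hconv.comp ((tendsto_add_atTop_nat N).comp hσ.tendsto_atTop)
    have h3 : ∀ n, dist (S.f T (φ (u (σ n) - T)) k) (φ (u (σ n))) ≤ ε := by
      intro n
      have h4 := hφ (u (σ n) - T) (by linarith [hu (σ n)]) T ⟨hT.le, le_rfl⟩
      rw [sub_add_cancel] at h4
      rw [dist_comm]
      exact h4.le
    exact le_of_tendsto (h2.dist hy2) (Eventually.of_forall h3)

lemma pre [CompactSpace X] {T : ℝ} (hT : 0 < T) (x : X) (k : K) {y : X}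
    (hy : y ∈ S.omegaZero T x k) :
    ∃ z ∈ S.omegaZero T x k, S.f T z k = y := by
  have hseq : ∀ j : ℕ, ∃ z, z ∈ S.omegaEps T (1/(j+1)) x k ∧ dist (S.f T z k) y ≤ 1/(j+1) := by
    intro j
    have hpos : (0:ℝ) < 1/(j+1) := by positivity
    obtain ⟨z, hz1, hz2⟩ := S.pre_exists hT x k ((S.mem_omegaZero_iff T x k).mp hy _ hpos)
    exact ⟨z, hz1, hz2⟩
  choose zs hz1 hz2 using hseq
  obtain ⟨z, -, σ, hσ, hzconv⟩ := isCompact_univ.tendsto_subseq (x := zs) (fun n => mem_univ _)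
  have hfz : S.f T z k = y := by
    have h2 : Tendsto (fun j => S.f T (zs (σ j)) k) atTop (𝓝 (S.f T z k)) :=
      (S.slice_cont hT.le k).continuousAt.tendsto.comp hzconv
    have h3 : Tendsto (fun j => S.f T (zs (σ j)) k) atTop (𝓝 y) := by
      rw [tendsto_iff_dist_tendsto_zero]
      apply squeeze_zero (fun j => dist_nonneg) (fun j => hz2 (σ j))
      have hb : Tendsto (fun j : ℕ => 1/((j:ℝ)+1)) atTop (𝓝 0) :=
        tendsto_one_div_add_atTop_nhds_zero_nat
      exact hb.comp hσ.tendsto_atTop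
    exact tendsto_nhds_unique h2 h3
  refine ⟨z, ?_, hfz⟩
  rw [S.mem_omegaZero_iff]
  intro ε hε
  obtain ⟨δ, hδ, hkey⟩ := S.key T x k hε
  obtain ⟨N₁, hN₁⟩ := Metric.tendsto_atTop.mp hzconv δ hδ
  obtain ⟨M, hM⟩ := exists_nat_ge (2/ε)
  set j := max N₁ M with hj
  have hσj : (M:ℝ) ≤ σ j :=
    calc (M:ℝ) ≤ j := Nat.cast_le.mpr (le_max_right _ _)
      _ ≤ σ j := Nat.cast_le.mpr hσ.le_apply
  have hsmall : (1:ℝ)/(σ j + 1) ≤ ε/2 := by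
    have h1 : 2/ε ≤ (σ j : ℝ) + 1 := by linarith [hσj, hM]
    have h2 : (1:ℝ)/((σ j:ℝ)+1) ≤ 1/(2/ε) := one_div_le_one_div_of_le (by positivity) h1
    rwa [one_div_div] at h2
  have hmem : zs (σ j) ∈ S.omegaEps T (ε/2) x k :=
    S.omegaEps_mono T hsmall x k (hz1 (σ j))
  refine hkey z (zs (σ j)) hmem ?_
  rw [dist_comm]
  exact hN₁ j (le_max_left _ _)

end PSemiflow

/-- Proposition 4.8: for any `x ∈ X`, `k ∈ K` the set `ω⁰(x,k)` is closed and
invariant. -/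
theorem omegaZero_closed_invariant {X K : Type*} [MetricSpace X] [CompactSpace X]
    [MetricSpace K] [CompactSpace K] (S : PSemiflow X K) (T : ℝ) (hT : 0 < T)
    (x : X) (k : K) :
    IsClosed (S.omegaZero T x k) ∧
    ∀ y ∈ S.omegaZero T x k, ∃ φ : ℝ → X, φ 0 = y ∧
      (∀ s t : ℝ, 0 ≤ t → S.f t (φ s) k = φ (s + t)) ∧
      range φ ⊆ S.omegaZero T x k := by
  classical
  refine ⟨S.omegaZero_isClosed T x k, fun y hy => ?_⟩
  -- construct backward sequence
  have hpre : ∀ z : {w // w ∈ S.omegaZero T x k},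
      ∃ w, w ∈ S.omegaZero T x k ∧ S.f T w k = z.1 := by
    intro z
    obtain ⟨w, hw1, hw2⟩ := S.pre hT x k z.2
    exact ⟨w, hw1, hw2⟩
  choose F hF1 hF2 using hpre
  set G : {w // w ∈ S.omegaZero T x k} → {w // w ∈ S.omegaZero T x k} :=
    fun z => ⟨F z, hF1 z⟩ with hGdef
  set g : ℕ → X := fun m => (G^[m] ⟨y, hy⟩ : {w // w ∈ S.omegaZero T x k}).1 with hgdef
  have hg0 : g 0 = y := rfl
  have hgmem : ∀ m, g m ∈ S.omegaZero T x k := fun m => (G^[m] ⟨y, hy⟩).2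
  have hgstep : ∀ m, S.f T (g (m+1)) k = g m := by
    intro m
    have h1 : G^[m+1] ⟨y, hy⟩ = G (G^[m] ⟨y, hy⟩) := Function.iterate_succ_apply' G m _
    have h2 : g (m+1) = F (G^[m] ⟨y, hy⟩) := by rw [hgdef]; simp only [h1]; rfl
    rw [h2]
    exact hF2 (G^[m] ⟨y, hy⟩)
  -- consistency
  have hcons : ∀ (m j : ℕ) (s : ℝ), 0 ≤ s + m*T →
      S.f (s + m*T) (g m) k = S.f (s + (m+j)*T) (g (m+j)) k := by
    intro m j
    induction j with
    | zero => intro s hs; norm_num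
    | succ j ih =>
      intro s hs
      rw [ih s hs]
      have h1 : (0:ℝ) ≤ s + (m+j)*T := by
        have : (0:ℝ) ≤ (j:ℝ) * T := by positivity
        push_cast; push_cast at hs; nlinarith
      have h2 := S.semigroup (s + ((m:ℝ)+j)*T) T h1 hT.le (g (m+j+1)) k
      rw [hgstep (m+j)] at h2
      have h3 : s + ((m:ℝ)+j)*T + T = s + ((m:ℝ)+(j+1))*T := by ring
      rw [h3] at h2
      have h4 : ((m:ℕ) + (j+1) : ℕ) = (m + j + 1 : ℕ) := by omega
      rw [h4]
      push_cast
      push_cast at h2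
      convert h2 using 3 <;> ring
  have hcons' : ∀ (m m' : ℕ) (s : ℝ), 0 ≤ s + m*T → 0 ≤ s + m'*T →
      S.f (s + m*T) (g m) k = S.f (s + m'*T) (g m') k := by
    intro m m' s h h'
    rcases le_total m m' with hmm | hmm
    · obtain ⟨j, rfl⟩ := Nat.exists_eq_add_of_le hmm
      have h5 := hcons m j s h
      push_cast at h5 ⊢
      exact h5
    · obtain ⟨j, rfl⟩ := Nat.exists_eq_add_of_le hmm
      have h5 := (hcons m' j s h').symm
      push_cast at h5 ⊢
      exact h5
  -- the full orbit
  set M : ℝ → ℕ := fun s => ⌈(-s)/T⌉₊ with hMdef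
  have hM : ∀ s : ℝ, 0 ≤ s + (M s) * T := by
    intro s
    have h1 : (-s)/T ≤ (M s : ℝ) := Nat.le_ceil _
    have h2 : -s ≤ (M s : ℝ) * T := by
      rw [div_le_iff₀ hT] at h1; linarith
    linarith
  set φ : ℝ → X := fun s => S.f (s + (M s) * T) (g (M s)) k with hφdef
  have hφ_eq : ∀ (s : ℝ) (m : ℕ), 0 ≤ s + m*T → φ s = S.f (s + m*T) (g m) k :=
    fun s m h => hcons' (M s) m s (hM s) h
  refine ⟨φ, ?_, ?_, ?_⟩
  · have h0 := hφ_eq 0 0 (by norm_num)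
    simp only [Nat.cast_zero, zero_mul, add_zero] at h0
    rw [h0, S.map_zero]
    exact hg0
  · intro s t ht
    have h1 : φ s = S.f (s + (M s) * T) (g (M s)) k := rfl
    rw [h1, S.semigroup t (s + (M s) * T) ht (hM s)]
    rw [hφ_eq (s+t) (M s) (by linarith [hM s])]
    congr 1
    ring
  · rintro w ⟨s, rfl⟩
    exact S.fwd hT x k (hgmem (M s)) (hM s)
end

section
/- Let x ∈ X, k ∈ K and suppose x ∈ ω⁰(x,k). Then for every ε > 0 there exists a periodic (k,x,ε)-motion: a (k,x,ε)-motion φ and a number t₀ > 0 such that φ(t + t₀) = φ(t) for all t ≥ 0. -/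
open Filter Topology Metric Set MeasureTheory
open scoped ENNReal

/-- Proposition 4.9 (a version of the C⁰-closing lemma): if `x ∈ ω⁰(x,k)`, then for
every `ε > 0` there exists a periodic `(k,x,ε)`-motion. -/
theorem periodic_eps_motion_of_mem_omegaZero {X K : Type*} [MetricSpace X]
    [CompactSpace X] [MetricSpace K] [CompactSpace K] (S : PSemiflow X K)
    (T : ℝ) (hT : 0 < T) (x : X) (k : K) (hx : x ∈ S.omegaZero T x k) :
    ∀ ε > (0:ℝ), ∃ (φ : ℝ → X) (t₀ : ℝ), S.IsEpsMotion T ε k x φ ∧ 0 < t₀ ∧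
      ∀ t : ℝ, 0 ≤ t → φ (t + t₀) = φ t := by
  intro ε hε
  -- uniform continuity of the flow on `[0,T] × X × {k}`
  obtain ⟨δ, hδ, hunif⟩ : ∃ δ > 0, ∀ s ∈ Icc (0:ℝ) T, ∀ a b : X, dist a b < δ →
      dist (S.f s a k) (S.f s b k) < ε / 2 := by
    have hC : IsCompact ((Icc (0:ℝ) T) ×ˢ ((univ : Set X) ×ˢ ({k} : Set K))) :=
      isCompact_Icc.prod (isCompact_univ.prod isCompact_singleton)
    have hsub : (Icc (0:ℝ) T) ×ˢ ((univ : Set X) ×ˢ ({k} : Set K)) ⊆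
        {p : ℝ × X × K | 0 ≤ p.1} := by
      rintro ⟨s, a, k'⟩ ⟨hs, -, -⟩
      exact hs.1
    have huc := hC.uniformContinuousOn_of_continuous (S.cont.mono hsub)
    rw [Metric.uniformContinuousOn_iff] at huc
    obtain ⟨δ, hδ, h⟩ := huc (ε / 2) (by linarith)
    refine ⟨δ, hδ, fun s hs a b hab => ?_⟩
    have hd : dist ((s, a, k) : ℝ × X × K) ((s, b, k) : ℝ × X × K) = dist a b := by
      simp [Prod.dist_eq, dist_self, max_eq_left dist_nonneg, max_eq_right dist_nonneg]
    exact h (s, a, k) ⟨hs, mem_univ _, rfl⟩ (s, b, k) ⟨hs, mem_univ _, rfl⟩ (hd ▸ hab)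
  set ε' : ℝ := min (δ / 2) (ε / 2) with hε'def
  have hε' : 0 < ε' := lt_min (by linarith) (by linarith)
  have hε'δ : ε' ≤ δ / 2 := min_le_left _ _
  have hε'ε : ε' ≤ ε / 2 := min_le_right _ _
  simp only [PSemiflow.omegaZero, mem_iInter₂] at hx
  obtain ⟨φ, ⟨hφ0, hφ⟩, ts, htsnn, htstop, hconv⟩ := hx ε' hε'
  -- choose a large return time
  have h1 : ∀ᶠ n in atTop, T ≤ ts n := htstop.eventually_ge_atTop T
  have h2 : ∀ᶠ n in atTop, dist (φ (ts n)) x < δ / 2 := by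
    have := hconv.eventually (Metric.ball_mem_nhds x (by linarith : (0:ℝ) < δ / 2))
    simpa [Metric.mem_ball] using this
  obtain ⟨n, hnT, hnd⟩ := (h1.and h2).exists
  set t₀ : ℝ := ts n with ht₀def
  have ht₀pos : 0 < t₀ := lt_of_lt_of_le hT hnT
  have ht₀ne : t₀ ≠ 0 := ne_of_gt ht₀pos
  set ψ : ℝ → X := fun t => φ (Int.fract (t / t₀) * t₀) with hψdef
  -- basic facts about the fractional reduction
  have hr0 : ∀ a : ℝ, 0 ≤ Int.fract (a / t₀) * t₀ :=
    fun a => mul_nonneg (Int.fract_nonneg _) ht₀pos.le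
  have hr1 : ∀ a : ℝ, Int.fract (a / t₀) * t₀ < t₀ := by
    intro a
    have := mul_lt_mul_of_pos_right (Int.fract_lt_one (a / t₀)) ht₀pos
    simpa using this
  have hψeq : ∀ a : ℝ, 0 ≤ a → a < t₀ → ψ a = φ a := by
    intro a ha0 ha1
    have hfr : Int.fract (a / t₀) = a / t₀ :=
      Int.fract_eq_self.mpr ⟨div_nonneg ha0 ht₀pos.le, (div_lt_one ht₀pos).mpr ha1⟩
    simp only [hψdef, hfr, div_mul_cancel₀ a ht₀ne]
  have hshift : ∀ (a : ℝ) (m : ℤ), ψ (a + m * t₀) = ψ a := by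
    intro a m
    have : (a + m * t₀) / t₀ = a / t₀ + m := by field_simp
    simp only [hψdef, this, Int.fract_add_intCast]
  -- periodicity
  have hper : ∀ t : ℝ, ψ (t + t₀) = ψ t := by
    intro t
    have := hshift t 1
    simpa using this
  refine ⟨ψ, t₀, ⟨?_, ?_⟩, ht₀pos, fun t _ => hper t⟩
  · -- ψ 0 = x
    simp [hψdef, Int.fract_zero, hφ0]
  · intro t ht τ hτ
    obtain ⟨hτ0, hτT⟩ := hτ
    set t' : ℝ := Int.fract (t / t₀) * t₀ with ht'def
    have ht'0 : 0 ≤ t' := hr0 t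
    have ht'1 : t' < t₀ := hr1 t
    have hψt : ψ t = φ t' := rfl
    -- reduce ψ (t + τ) to ψ (t' + τ)
    have hkey : ψ (t + τ) = ψ (t' + τ) := by
      have ht'eq : t' = t - ⌊t / t₀⌋ * t₀ := by
        simp only [ht'def, Int.fract]
        field_simp
      have : t + τ = (t' + τ) + (⌊t / t₀⌋ : ℤ) * t₀ := by rw [ht'eq]; ring
      rw [this, hshift]
    rw [hψt, hkey]
    by_cases hcase : t' + τ < t₀
    · -- no wrap
      rw [hψeq _ (by linarith) hcase]
      have := hφ t' ht'0 τ ⟨hτ0, hτT⟩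
      have hlt : ε' < ε := lt_of_le_of_lt hε'ε (by linarith)
      linarith [hφ t' ht'0 τ ⟨hτ0, hτT⟩]
    · -- wrap around the period
      push_neg at hcase
      set u : ℝ := t' + τ - t₀ with hudef
      have hu0 : 0 ≤ u := by simp only [hudef]; linarith
      have huτ : u < τ := by simp only [hudef]; linarith
      have huT : u ≤ T := le_of_lt (lt_of_lt_of_le huτ hτT)
      have hut₀ : u < t₀ := lt_of_lt_of_le (lt_of_lt_of_le huτ hτT) hnT
      set σ : ℝ := t₀ - t' with hσdef
      have hσ0 : 0 ≤ σ := by simp only [hσdef]; linarith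
      have hσT : σ ≤ T := by
        have : σ ≤ τ := by simp only [hσdef]; linarith
        linarith
      have hψτ : ψ (t' + τ) = φ u := by
        have : t' + τ = u + (1 : ℤ) * t₀ := by simp [hudef]
        rw [this, hshift, hψeq _ hu0 hut₀]
      rw [hψτ]
      -- estimates
      have a1 : dist (φ u) (S.f u x k) < ε' := by
        have := hφ 0 le_rfl u ⟨hu0, huT⟩
        simpa [hφ0] using this
      have a2 : dist (φ t₀) (S.f σ (φ t') k) < ε' := by
        have := hφ t' ht'0 σ ⟨hσ0, hσT⟩
        have ht'σ : t' + σ = t₀ := by simp [hσdef]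
        rwa [ht'σ] at this
      have hxy : dist x (S.f σ (φ t') k) < δ := by
        calc dist x (S.f σ (φ t') k) ≤ dist x (φ t₀) + dist (φ t₀) (S.f σ (φ t') k) :=
              dist_triangle _ _ _
          _ < δ / 2 + ε' := by
              rw [dist_comm]
              exact add_lt_add hnd a2
          _ ≤ δ := by linarith
      have a3 : dist (S.f u x k) (S.f u (S.f σ (φ t') k) k) < ε / 2 :=
        hunif u ⟨hu0, huT⟩ _ _ hxy
      have hsg : S.f u (S.f σ (φ t') k) k = S.f τ (φ t') k := by
        rw [S.semigroup u σ hu0 hσ0]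
        congr 1
        simp [hudef, hσdef]
      rw [hsg] at a3
      calc dist (φ u) (S.f τ (φ t') k)
          ≤ dist (φ u) (S.f u x k) + dist (S.f u x k) (S.f τ (φ t') k) := dist_triangle _ _ _
        _ < ε' + ε / 2 := add_lt_add a1 a3
        _ ≤ ε := by linarith
end

section
/- Let k ∈ K and let Q be a connected subset of ω⁰(k) = ⋃_{x∈X} ω⁰(x,k). Then Q ⊆ ω⁰(y,k) for every y ∈ Q. -/
open Filter Topology Metric Set MeasureTheory
open scoped ENNReal

section Aux

variable {X K : Type*} [MetricSpace X] [CompactSpace X] [MetricSpace K] [CompactSpace K]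

/-- Monotonicity of the ε-motion property in ε. -/
lemma psf_motion_mono (S : PSemiflow X K) {T ε ε' : ℝ} {k : K} {x : X} {φ : ℝ → X}
    (h : S.IsEpsMotion T ε' k x φ) (hle : ε' ≤ ε) : S.IsEpsMotion T ε k x φ :=
  ⟨h.1, fun t ht τ hτ => lt_of_lt_of_le (h.2 t ht τ hτ) hle⟩

/-- Uniform-continuity modulus for the time-`[0,T]` flow map at parameter `k`. -/
lemma psf_modulus (S : PSemiflow X K) (T : ℝ) (k : K) {ε₃ : ℝ} (hε₃ : 0 < ε₃) :
    ∃ r > 0, ∀ s ∈ Set.Icc (0:ℝ) T, ∀ a b : X, dist a b ≤ r →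
      dist (S.f s a k) (S.f s b k) < ε₃ := by
  haveI : CompactSpace (Set.Icc (0:ℝ) T) := isCompact_iff_compactSpace.mp isCompact_Icc
  have hg : Continuous fun p : Set.Icc (0:ℝ) T × X => S.f p.1 p.2 k := by
    have h1 : Continuous fun p : Set.Icc (0:ℝ) T × X => ((p.1 : ℝ), p.2, k) := by
      fun_prop
    have h2 : ∀ p : Set.Icc (0:ℝ) T × X, ((p.1 : ℝ), p.2, k) ∈ {p : ℝ × X × K | 0 ≤ p.1} :=
      fun p => p.1.2.1
    exact S.cont.comp_continuous h1 h2
  have huc : UniformContinuous fun p : Set.Icc (0:ℝ) T × X => S.f p.1 p.2 k :=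
    CompactSpace.uniformContinuous_of_continuous hg
  obtain ⟨δ, hδ, hδ'⟩ := Metric.uniformContinuous_iff.mp huc ε₃ hε₃
  refine ⟨δ/2, half_pos hδ, fun s hs a b hab => ?_⟩
  have : dist ((⟨s, hs⟩, a) : Set.Icc (0:ℝ) T × X) (⟨s, hs⟩, b) < δ := by
    rw [Prod.dist_eq]
    have h1 : dist (⟨s, hs⟩ : Set.Icc (0:ℝ) T) ⟨s, hs⟩ = 0 := dist_self _
    rw [h1, max_eq_right dist_nonneg]
    linarith
  exact hδ' this

/-- Self-recurrence: a point of `ω⁰(x,k)` lies in each of its own `ω^ε` sets. -/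
lemma psf_self (S : PSemiflow X K) (T : ℝ) (hT : 0 < T) (k : K) {x a : X}
    (h : a ∈ S.omegaZero T x k) {ε : ℝ} (hε : 0 < ε) :
    a ∈ S.omegaEps T ε a k := by
  obtain ⟨r, hr, hmod⟩ := psf_modulus S T k (half_pos hε)
  have h2 : a ∈ S.omegaEps T (ε/2) x k := by
    have := Set.mem_iInter₂.mp h (ε/2) (half_pos hε)
    exact this
  obtain ⟨φ, hφ, t, ht0, htop, hconv⟩ := h2
  obtain ⟨N, hN⟩ := Metric.tendsto_atTop.mp hconv r hr
  obtain ⟨M, hM⟩ := eventually_atTop.mp (htop.eventually_ge_atTop (t N + 1))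
  set ψ : ℝ → X := fun s => if s ≤ 0 then a else φ (t N + s) with hψdef
  have hψmotion : S.IsEpsMotion T ε k a ψ := by
    constructor
    · simp [hψdef]
    · intro t' ht' τ hτ
      rcases eq_or_lt_of_le ht' with h0 | h0
      · -- t' = 0
        have h0' := h0.symm
        subst h0'
        rcases eq_or_lt_of_le hτ.1 with hτ0 | hτ0
        · have hτ0' := hτ0.symm
          subst hτ0'
          have e0 : ψ 0 = a := by simp [hψdef]
          rw [show (0:ℝ) + 0 = 0 by ring, e0, S.map_zero]
          simpa using hε
        · have e1 : ψ (0 + τ) = φ (t N + τ) := by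
            rw [zero_add]
            simp only [hψdef]
            rw [if_neg (not_le.mpr hτ0)]
          have e2 : ψ 0 = a := by simp [hψdef]
          rw [e1, e2]
          calc dist (φ (t N + τ)) (S.f τ a k)
              ≤ dist (φ (t N + τ)) (S.f τ (φ (t N)) k)
                + dist (S.f τ (φ (t N)) k) (S.f τ a k) := dist_triangle _ _ _
            _ < ε/2 + ε/2 := by
                have h1 := hφ.2 (t N) (ht0 N) τ hτ
                have h2 := hmod τ hτ (φ (t N)) a (le_of_lt (hN N le_rfl))
                exact add_lt_add h1 h2
            _ = ε := by ring
      · -- t' > 0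
        have e1 : ψ t' = φ (t N + t') := by
          simp only [hψdef]; rw [if_neg (not_le.mpr h0)]
        have e2 : ψ (t' + τ) = φ (t N + t' + τ) := by
          have : 0 < t' + τ := lt_of_lt_of_le h0 (le_add_of_nonneg_right hτ.1)
          simp only [hψdef]
          rw [if_neg (not_le.mpr this)]
          ring_nf
        rw [e1, e2]
        have := hφ.2 (t N + t') (add_nonneg (ht0 N) ht') τ hτ
        calc dist (φ (t N + t' + τ)) (S.f τ (φ (t N + t')) k)
            < ε/2 := by rw [show t N + t' + τ = t N + t' + τ from rfl]; exact this
          _ < ε := half_lt_self hε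
  refine ⟨ψ, hψmotion, fun n => t (n + M) - t N, ?_, ?_, ?_⟩
  · intro n
    show 0 ≤ t (n + M) - t N
    have := hM (n + M) (Nat.le_add_left M n)
    linarith
  · have : Tendsto (fun n => t (n + M)) atTop atTop :=
      htop.comp (tendsto_add_atTop_nat M)
    exact tendsto_atTop_add_const_right atTop (-(t N)) this |>.congr
      (fun n => by ring_nf)
  · have hpos : ∀ n, ψ (t (n + M) - t N) = φ (t (n + M)) := by
      intro n
      have h1 : t N + 1 ≤ t (n + M) := hM (n + M) (Nat.le_add_left M n)
      have : ¬ (t (n + M) - t N ≤ 0) := by push_neg; linarith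
      have e : t N + (t (n + M) - t N) = t (n + M) := by ring
      simp only [hψdef]
      rw [if_neg this, e]
    have : Tendsto (fun n => φ (t (n + M))) atTop (𝓝 a) :=
      hconv.comp (tendsto_add_atTop_nat M)
    exact this.congr (fun n => (hpos n).symm)

/-- Gluing a motion (whose tail is an `ε'`-motion) with a new `ε'`-motion at time `t₀`. -/
lemma psf_glue (S : PSemiflow X K) (T : ℝ) (hT : 0 < T) (k : K)
    {ε ε' ε₃ r : ℝ} (hε₃ : 0 < ε₃)
    (hmod : ∀ s ∈ Set.Icc (0:ℝ) T, ∀ a b : X, dist a b ≤ r →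
      dist (S.f s a k) (S.f s b k) < ε₃)
    (hε'r : ε' ≤ r) (hsum : ε' + 2*ε₃ ≤ ε)
    {y b wmid : X} {φ ψ ψ' : ℝ → X} {t₁ t₀ : ℝ}
    (hφ : S.IsEpsMotion T ε k y φ) (ht₁ : 0 ≤ t₁)
    (hψ : S.IsEpsMotion T ε' k wmid ψ)
    (hagree : ∀ t, t₁ ≤ t → φ t = ψ (t - t₁))
    (hψ' : S.IsEpsMotion T ε' k b ψ')
    (ht₀ : t₁ + T ≤ t₀) (hjump : dist (φ t₀) b ≤ r) :
    S.IsEpsMotion T ε k y (fun u => if u < t₀ then φ u else ψ' (u - t₀)) := by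
  have ht₀pos : 0 < t₀ := lt_of_lt_of_le (by linarith) ht₀
  constructor
  · simp only [if_pos ht₀pos]; exact hφ.1
  · intro t ht τ hτ
    by_cases h1 : t + τ < t₀
    · have h2 : t < t₀ := lt_of_le_of_lt (le_add_of_nonneg_right hτ.1) h1
      simp only [if_pos h1, if_pos h2]
      exact hφ.2 t ht τ hτ
    · push_neg at h1
      by_cases h2 : t < t₀
      · -- cross case
        simp only [if_neg (not_lt.mpr h1), if_pos h2]
        set s := t + τ - t₀ with hs
        set v := t₀ - t with hv
        set u := t - t₁ with hu
        have hs0 : 0 ≤ s := by simp only [hs]; linarith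
        have hsτ : s ≤ τ := by simp only [hs]; linarith
        have hsT : s ≤ T := le_trans hsτ hτ.2
        have hv0 : 0 ≤ v := by simp only [hv]; linarith
        have hvτ : v ≤ τ := by simp only [hv]; linarith
        have hvT : v ≤ T := le_trans hvτ hτ.2
        have htt₁ : t₁ ≤ t := by linarith
        have hu0 : 0 ≤ u := by simp only [hu]; linarith
        have key3 : dist (S.f s (φ t₀) k) (S.f τ (φ t) k) < ε₃ := by
          have hφt : φ t = ψ u := hagree t htt₁
          have hφt₀ : φ t₀ = ψ (u + v) := by
            rw [hagree t₀ (by linarith)]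
            congr 1
            simp only [hu, hv]; ring
          have hsemi : S.f τ (φ t) k = S.f s (S.f v (φ t) k) k := by
            rw [S.semigroup s v hs0 hv0]
            congr 1
            simp only [hs, hv]; ring
          rw [hsemi, hφt₀, hφt]
          have hd : dist (ψ (u + v)) (S.f v (ψ u) k) ≤ r := by
            have := hψ.2 u hu0 v ⟨hv0, hvT⟩
            linarith
          exact hmod s ⟨hs0, hsT⟩ _ _ hd
        have key2 : dist (S.f s b k) (S.f s (φ t₀) k) < ε₃ := by
          apply hmod s ⟨hs0, hsT⟩
          rw [dist_comm]; exact hjump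
        have key1 : dist (ψ' s) (S.f s b k) < ε' := by
          have := hψ'.2 0 le_rfl s ⟨hs0, hsT⟩
          rw [zero_add, hψ'.1] at this
          exact this
        calc dist (ψ' (t + τ - t₀)) (S.f τ (φ t) k)
            ≤ dist (ψ' s) (S.f s b k) + dist (S.f s b k) (S.f s (φ t₀) k)
              + dist (S.f s (φ t₀) k) (S.f τ (φ t) k) := dist_triangle4 _ _ _ _
          _ < ε' + ε₃ + ε₃ := by
              apply add_lt_add (add_lt_add key1 key2) key3
          _ ≤ ε := by linarith
      · -- t ≥ t₀
        push_neg at h2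
        simp only [if_neg (not_lt.mpr h1), if_neg (not_lt.mpr h2)]
        have e : t + τ - t₀ = (t - t₀) + τ := by ring
        rw [e]
        have := hψ'.2 (t - t₀) (by linarith) τ hτ
        calc dist (ψ' (t - t₀ + τ)) (S.f τ (ψ' (t - t₀)) k) < ε' := this
          _ ≤ ε := by linarith

/-- A preconnected set is δ-chain connected. -/
lemma psf_chain_exists {Q : Set X} (hconn : IsPreconnected Q) {y z : X}
    (hy : y ∈ Q) (hz : z ∈ Q) {δ : ℝ} (hδ : 0 < δ) :
    ∃ (m : ℕ) (w : ℕ → X), w 0 = y ∧ w m = z ∧ (∀ i, i ≤ m → w i ∈ Q) ∧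
      ∀ i, i < m → dist (w i) (w (i+1)) < δ := by
  set A : Set X := {c | c ∈ Q ∧ ∃ (m : ℕ) (w : ℕ → X), w 0 = y ∧ w m = c ∧
      (∀ i, i ≤ m → w i ∈ Q) ∧ ∀ i, i < m → dist (w i) (w (i+1)) < δ} with hA
  have hyA : y ∈ A := ⟨hy, 0, fun _ => y, rfl, rfl, fun i _ => hy, fun i hi => absurd hi (Nat.not_lt_zero i)⟩
  have hext : ∀ a ∈ A, ∀ c ∈ Q, dist a c < δ → c ∈ A := by
    rintro a ⟨haQ, m, w, hw0, hwm, hwQ, hwd⟩ c hcQ hac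
    refine ⟨hcQ, m + 1, fun i => if i ≤ m then w i else c, ?_, ?_, ?_, ?_⟩
    · simp [Nat.zero_le]; exact hw0
    · simp
    · intro i hi
      by_cases h : i ≤ m
      · simp [h]; exact hwQ i h
      · simp [h]; exact hcQ
    · intro i hi
      rcases Nat.lt_succ_iff_lt_or_eq.mp hi with h | h
      · have h1 : i ≤ m := le_of_lt h
        have h2 : i + 1 ≤ m := h
        simp only [if_pos h1, if_pos h2]
        exact hwd i h
      · subst h
        simp only [if_pos le_rfl, if_neg (Nat.not_succ_le_self i), hwm]
        exact hac
  by_contra hcon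
  have hzA : z ∉ A := fun h => hcon h.2
  set U : Set X := ⋃ a ∈ A, Metric.ball a δ with hU
  set V : Set X := ⋃ b ∈ Q \ A, Metric.ball b δ with hV
  have hUo : IsOpen U := isOpen_biUnion (fun a _ => Metric.isOpen_ball)
  have hVo : IsOpen V := isOpen_biUnion (fun a _ => Metric.isOpen_ball)
  have hcover : Q ⊆ U ∪ V := by
    intro c hc
    by_cases h : c ∈ A
    · exact Or.inl (Set.mem_biUnion h (Metric.mem_ball_self hδ))
    · exact Or.inr (Set.mem_biUnion ⟨hc, h⟩ (Metric.mem_ball_self hδ))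
  have hUne : (Q ∩ U).Nonempty := ⟨y, hy, Set.mem_biUnion hyA (Metric.mem_ball_self hδ)⟩
  have hVne : (Q ∩ V).Nonempty := ⟨z, hz, Set.mem_biUnion ⟨hz, hzA⟩ (Metric.mem_ball_self hδ)⟩
  obtain ⟨c, hcQ, hcU, hcV⟩ := hconn U V hUo hVo hcover hUne hVne
  obtain ⟨a, haA, hca⟩ := Set.mem_iUnion₂.mp hcU
  obtain ⟨b, hbQA, hcb⟩ := Set.mem_iUnion₂.mp hcV
  have hcA : c ∈ A := hext a haA c hcQ (by rw [dist_comm]; exact hca)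
  have hbA : b ∈ A := hext c hcA b hbQA.1 hcb
  exact hbQA.2 hbA

end Aux

/-- Proposition 4.11: if `Q` is a connected subset of `ω⁰(k) = ⋃ₓ ω⁰(x,k)`, then
`Q ⊆ ω⁰(y,k)` for every `y ∈ Q`. -/
theorem connected_subset_omegaZeroK {X K : Type*} [MetricSpace X] [CompactSpace X]
    [MetricSpace K] [CompactSpace K] (S : PSemiflow X K) (T : ℝ) (hT : 0 < T)
    (k : K) (Q : Set X) (hQ : Q ⊆ ⋃ x : X, S.omegaZero T x k)
    (hconn : IsPreconnected Q) :
    ∀ y ∈ Q, Q ⊆ S.omegaZero T y k := by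
  intro y hy z hz
  refine Set.mem_iInter₂.mpr fun ε hε => ?_
  obtain ⟨r, hr, hmod⟩ := psf_modulus S T k (show (0:ℝ) < ε/4 by positivity)
  set ε' : ℝ := min (ε/2) r with hε'def
  have hε'pos : 0 < ε' := lt_min (by positivity) hr
  have hε'r : ε' ≤ r := min_le_right _ _
  have hε'ε : ε' ≤ ε/2 := min_le_left _ _
  have hsum : ε' + 2*(ε/4) ≤ ε := by linarith
  obtain ⟨m, w, hw0, hwm, hwQ, hwd⟩ := psf_chain_exists hconn hy hz (half_pos hr)
  have key : ∀ i, i ≤ m → ∃ (φ ψ : ℝ → X) (t₁ : ℝ), 0 ≤ t₁ ∧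
      S.IsEpsMotion T ε k y φ ∧ S.IsEpsMotion T ε' k (w i) ψ ∧
      (∀ t, t₁ ≤ t → φ t = ψ (t - t₁)) ∧
      (∃ s : ℕ → ℝ, (∀ n, 0 ≤ s n) ∧ Tendsto s atTop atTop ∧
        Tendsto (fun n => ψ (s n)) atTop (𝓝 (w i))) := by
    intro i
    induction i with
    | zero =>
      intro _
      obtain ⟨x, hx⟩ := Set.mem_iUnion.mp (hQ hy)
      obtain ⟨ψ, hψ, s, hs0, hstop, hsconv⟩ := psf_self S T hT k hx hε'pos
      have hψε : S.IsEpsMotion T ε k y ψ := psf_motion_mono S hψ (by linarith)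
      have hψ0 : S.IsEpsMotion T ε' k (w 0) ψ := by rw [hw0]; exact hψ
      exact ⟨ψ, ψ, 0, le_rfl, hψε, hψ0, fun t _ => by rw [sub_zero], s, hs0, hstop,
        by rw [hw0]; exact hsconv⟩
    | succ n ih =>
      intro hn
      have hnm : n ≤ m := le_of_lt (Nat.lt_of_succ_le hn)
      obtain ⟨φ, ψ, t₁, ht₁, hφ, hψ, hagree, s, hs0, hstop, hsconv⟩ := ih hnm
      obtain ⟨N1, hN1⟩ := Metric.tendsto_atTop.mp hsconv (r/2) (half_pos hr)
      obtain ⟨N2, hN2⟩ := eventually_atTop.mp (hstop.eventually_ge_atTop T)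
      set n₀ := max N1 N2 with hn₀
      set t₀ := t₁ + s n₀ with ht₀def
      have hsT : T ≤ s n₀ := hN2 n₀ (le_max_right _ _)
      have ht₀ : t₁ + T ≤ t₀ := by rw [ht₀def]; linarith
      have hφt₀ : φ t₀ = ψ (s n₀) := by
        rw [hagree t₀ (by rw [ht₀def]; linarith)]
        congr 1
        rw [ht₀def]; ring
      have hjump : dist (φ t₀) (w (n+1)) ≤ r := by
        rw [hφt₀]
        calc dist (ψ (s n₀)) (w (n+1))
            ≤ dist (ψ (s n₀)) (w n) + dist (w n) (w (n+1)) := dist_triangle _ _ _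
          _ ≤ r/2 + r/2 := add_le_add (le_of_lt (hN1 n₀ (le_max_left _ _)))
              (le_of_lt (hwd n (Nat.lt_of_succ_le hn)))
          _ = r := by ring
      obtain ⟨x', hx'⟩ := Set.mem_iUnion.mp (hQ (hwQ (n+1) hn))
      obtain ⟨ψ', hψ', s', hs'0, hs'top, hs'conv⟩ := psf_self S T hT k hx' hε'pos
      have ht₀0 : 0 ≤ t₀ := by
        simp only [ht₀def]
        have := hs0 n₀
        linarith
      refine ⟨fun u => if u < t₀ then φ u else ψ' (u - t₀), ψ', t₀, ht₀0, ?_, hψ', ?_, s', hs'0, hs'top, hs'conv⟩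
      · exact psf_glue S T hT k (by linarith) hmod hε'r hsum hφ ht₁ hψ hagree hψ' ht₀ hjump
      · intro t hht
        simp only [if_neg (not_lt.mpr hht)]
  obtain ⟨φ, ψ, t₁, ht₁, hφ, hψ, hagree, s, hs0, hstop, hsconv⟩ := key m le_rfl
  refine ⟨φ, hφ, fun n => t₁ + s n, fun n => add_nonneg ht₁ (hs0 n), ?_, ?_⟩
  · exact tendsto_atTop_add_const_left atTop t₁ hstop
  · have heq : ∀ n, φ (t₁ + s n) = ψ (s n) := by
      intro n
      rw [hagree (t₁ + s n) (le_add_of_nonneg_right (hs0 n))]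
      congr 1; ring
    rw [hwm] at hsconv
    exact hsconv.congr (fun n => (heq n).symm)
end
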